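/- arXiv:1810.01707 — 4 statements merged into one kernel-verified Lean document; each statement's English description precedes it below -/
import Mathlib

section
/- Let n ≥ 2r with r ≥ 2, and let 𝒜 be an MLCIF on ([n] choose r). If {2,3} is a generator of 𝒜 (i.e. {2,3} belongs to the canonical generating family of 𝒜), then 𝒜 = AHM_3. -/
open Finset

/-- The family of all `r`-element subsets of `[n] = {1, …, n}`. -/
def chooseFam (n r : ℕ) : Finset (Finset ℕ) := (Finset.Icc 1 n).powersetCard r

/-- A family of sets is intersecting if any two members meet. -/
def IntersectingFam (𝒜 : Finset (Finset ℕ)) : Prop :=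
  ∀ A ∈ 𝒜, ∀ B ∈ 𝒜, (A ∩ B).Nonempty

/-- `DomLE B A` : writing the elements in increasing order, the `i`-th element
of `B` is at most the `i`-th element of `A` (and they have the same size). -/
def DomLE (B A : Finset ℕ) : Prop :=
  B.card = A.card ∧
  ∀ (i : ℕ) (hB : i < (B.sort (· ≤ ·)).length) (hA : i < (A.sort (· ≤ ·)).length),
    (B.sort (· ≤ ·)).get ⟨i, hB⟩ ≤ (A.sort (· ≤ ·)).get ⟨i, hA⟩

/-- A family of `r`-subsets of `[n]` is left-compressed if it is downward closed
under the domination order. -/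
def LeftCompressed (n r : ℕ) (𝒜 : Finset (Finset ℕ)) : Prop :=
  ∀ A ∈ 𝒜, ∀ B ∈ chooseFam n r, DomLE B A → B ∈ 𝒜

/-- A left-compressed intersecting family in `([n] choose r)`. -/
def IsLCIF (n r : ℕ) (𝒜 : Finset (Finset ℕ)) : Prop :=
  𝒜 ⊆ chooseFam n r ∧ IntersectingFam 𝒜 ∧ LeftCompressed n r 𝒜

/-- A maximal left-compressed intersecting family. -/
def IsMLCIF (n r : ℕ) (𝒜 : Finset (Finset ℕ)) : Prop :=
  IsLCIF n r 𝒜 ∧ ∀ ℬ : Finset (Finset ℕ), IsLCIF n r ℬ → 𝒜 ⊆ ℬ → ℬ = 𝒜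

/-- The number of members of `𝒜` hitting `X`. -/
def hit (X : Finset ℕ) (𝒜 : Finset (Finset ℕ)) : ℕ :=
  (𝒜.filter fun A => (A ∩ X).Nonempty).card

/-- An MLCIF optimal for `X`: it maximises `hit X` among all MLCIFs. -/
def OptimalMLCIF (n r : ℕ) (X : Finset ℕ) (𝒜 : Finset (Finset ℕ)) : Prop :=
  IsMLCIF n r 𝒜 ∧ ∀ ℬ : Finset (Finset ℕ), IsMLCIF n r ℬ → hit X ℬ ≤ hit X 𝒜

/-- An LCIF optimal for `X` among all LCIFs. -/
def OptimalLCIF (n r : ℕ) (X : Finset ℕ) (𝒜 : Finset (Finset ℕ)) : Prop :=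
  IsLCIF n r 𝒜 ∧ ∀ ℬ : Finset (Finset ℕ), IsLCIF n r ℬ → hit X ℬ ≤ hit X 𝒜

/-- The `t`-adjusted Hilton–Milner family. -/
def AHM (n r t : ℕ) : Finset (Finset ℕ) :=
  (chooseFam n r).filter fun A =>
    (1 ∈ A ∧ (A ∩ Finset.Icc 2 t).Nonempty) ∨ Finset.Icc 2 t ⊆ A

/-- The star: all `r`-subsets of `[n]` containing `1`. -/
def starFam (n r : ℕ) : Finset (Finset ℕ) :=
  (chooseFam n r).filter fun A => 1 ∈ A

/-- `G ⊆ [n]` is a potential generator of `𝒜`: every `A ∈ ([n] choose r)`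
containing `G` lies in `𝒜`. -/
def PotGen (n r : ℕ) (𝒜 : Finset (Finset ℕ)) (G : Finset ℕ) : Prop :=
  G ⊆ Finset.Icc 1 n ∧ ∀ A ∈ chooseFam n r, G ⊆ A → A ∈ 𝒜

open Classical in
/-- The canonical generating family: all inclusion-minimal potential generators. -/
noncomputable def canonGen (n r : ℕ) (𝒜 : Finset (Finset ℕ)) : Finset (Finset ℕ) :=
  (Finset.Icc 1 n).powerset.filter fun G =>
    PotGen n r 𝒜 G ∧ ∀ G' ⊆ G, PotGen n r 𝒜 G' → G' = G

/-- The rank of `𝒜`: the smallest size of a generator. -/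
noncomputable def rankFam (n r : ℕ) (𝒜 : Finset (Finset ℕ)) : ℕ :=
  sInf {k : ℕ | ∃ G ∈ canonGen n r 𝒜, G.card = k}

/-- The family generated by `𝒢` with respect to `n` and `r`. -/
def genFam (n r : ℕ) (𝒢 : Finset (Finset ℕ)) : Finset (Finset ℕ) :=
  (chooseFam n r).filter fun A => ∃ G ∈ 𝒢, G ⊆ A

/-- `𝒜 ∈ I_j`: an MLCIF of rank two whose generators of size two are precisely
`{1,2}, {1,3}, …, {1,j}`. -/
noncomputable def MemI (n r j : ℕ) (𝒜 : Finset (Finset ℕ)) : Prop :=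
  IsMLCIF n r 𝒜 ∧ rankFam n r 𝒜 = 2 ∧
    (canonGen n r 𝒜).filter (fun G => G.card = 2) =
      (Finset.Icc 2 j).image fun i => ({1, i} : Finset ℕ)

lemma list_get_le_iff (l : List ℕ) (hs : l.SortedLT) (i : ℕ) (h : i < l.length) (k : ℕ) :
    l.get ⟨i, h⟩ ≤ k ↔ i < (l.filter (fun x => x ≤ k)).length := by
  have hmono := hs.strictMono_get.monotone
  constructor
  · intro hle
    have hself : (l.take (i+1)).filter (fun x => x ≤ k) = l.take (i+1) := by
      rw [List.filter_eq_self]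
      intro x hx
      obtain ⟨⟨j, hj⟩, rfl⟩ := List.mem_iff_get.1 hx
      have hji : j ≤ i := by simp [List.length_take] at hj; omega
      have hj' : j < l.length := by omega
      have hg : (l.take (i+1)).get ⟨j, hj⟩ = l.get ⟨j, hj'⟩ := by
        simp [List.get_eq_getElem, ← List.getElem_take' hj' (by omega : j < i+1)]
      rw [hg]
      simp only [decide_eq_true_eq]
      exact le_trans (hmono (show (⟨j, hj'⟩ : Fin l.length) ≤ ⟨i, h⟩ from hji)) hle
    have hsub : ((l.take (i+1)).filter (fun x => x ≤ k)).length
        ≤ (l.filter (fun x => x ≤ k)).length :=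
      ((l.take_sublist (i+1)).filter _).length_le
    rw [hself] at hsub
    have hlen : (l.take (i+1)).length = i + 1 := by simp [List.length_take]; omega
    omega
  · intro hlt
    by_contra hgt
    push_neg at hgt
    have hdrop : (l.drop i).filter (fun x => x ≤ k) = [] := by
      rw [List.filter_eq_nil_iff]
      intro x hx
      obtain ⟨⟨j, hj⟩, rfl⟩ := List.mem_iff_get.1 hx
      have hj' : i + j < l.length := by simp [List.length_drop] at hj; omega
      have hg : (l.drop i).get ⟨j, hj⟩ = l.get ⟨i + j, hj'⟩ := by
        simp only [List.get_eq_getElem]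
        exact (List.getElem_drop' hj').symm
      rw [hg]
      simp only [decide_eq_true_eq, not_le]
      exact lt_of_lt_of_le hgt (hmono (show (⟨i, h⟩ : Fin l.length) ≤ ⟨i+j, hj'⟩ from Nat.le_add_right i j))
    have hle : (l.filter (fun x => x ≤ k)).length ≤ i := by
      conv_lhs => rw [← List.take_append_drop i l]
      rw [List.filter_append, hdrop]
      simp
      calc (List.filter (fun x => decide (x ≤ k)) (List.take i l)).length
          ≤ (List.take i l).length := List.length_filter_le _ _
        _ ≤ i := by simp [List.length_take]
    omega

lemma length_filter_sort (B : Finset ℕ) (k : ℕ) :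
    ((B.sort (· ≤ ·)).filter (fun x => x ≤ k)).length = (B.filter (fun x => x ≤ k)).card := by
  have h : Multiset.filter (fun x => x ≤ k) (↑(B.sort (· ≤ ·)) : Multiset ℕ)
      = Multiset.filter (fun x => x ≤ k) B.val := by rw [Finset.sort_eq]
  rw [Multiset.filter_coe] at h
  have := congrArg Multiset.card h
  simpa [Finset.card, Finset.filter] using this

lemma get_le_iff (B : Finset ℕ) (i : ℕ) (h : i < (B.sort (· ≤ ·)).length) (k : ℕ) :
    (B.sort (· ≤ ·)).get ⟨i, h⟩ ≤ k ↔ i < (B.filter (fun x => x ≤ k)).card := by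
  rw [← length_filter_sort]
  exact list_get_le_iff _ (B.sortedLT_sort) i h k

lemma filter_card_swap (B : Finset ℕ) (a b k : ℕ) (hb : b ∈ B) (ha : a ∉ B) (hba : b ≤ a) :
    ((insert a (B.erase b)).filter (fun x => x ≤ k)).card ≤ (B.filter (fun x => x ≤ k)).card := by
  by_cases hak : a ≤ k
  · have hbk : b ≤ k := hba.trans hak
    rw [Finset.filter_insert, if_pos hak, Finset.filter_erase]
    have hbf : b ∈ B.filter (fun x => x ≤ k) := Finset.mem_filter.2 ⟨hb, hbk⟩
    calc (insert a ((B.filter (fun x => x ≤ k)).erase b)).card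
        ≤ ((B.filter (fun x => x ≤ k)).erase b).card + 1 := Finset.card_insert_le _ _
      _ = (B.filter (fun x => x ≤ k)).card := by
          rw [Finset.card_erase_of_mem hbf]
          have := Finset.card_pos.2 ⟨b, hbf⟩
          omega
  · rw [Finset.filter_insert, if_neg hak, Finset.filter_erase]
    exact Finset.card_le_card (Finset.erase_subset _ _)

lemma domLE_swap (B : Finset ℕ) (a b : ℕ) (hb : b ∈ B) (ha : a ∉ B) (hba : b ≤ a) :
    DomLE B (insert a (B.erase b)) := by
  have haA : a ∉ B.erase b := fun h => ha (Finset.mem_of_mem_erase h)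
  have hcard : B.card = (insert a (B.erase b)).card := by
    rw [Finset.card_insert_of_notMem haA, Finset.card_erase_of_mem hb]
    have := Finset.card_pos.2 ⟨b, hb⟩
    omega
  refine ⟨hcard, ?_⟩
  intro i hB hA
  set x := ((insert a (B.erase b)).sort (· ≤ ·)).get ⟨i, hA⟩ with hx
  have h1 : i < ((insert a (B.erase b)).filter (fun y => y ≤ x)).card :=
    (get_le_iff _ i hA x).1 (le_refl x)
  have h2 : i < (B.filter (fun y => y ≤ x)).card :=
    lt_of_lt_of_le h1 (filter_card_swap B a b x hb ha hba)
  exact (get_le_iff B i hB x).2 h2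

/-- For `n ≥ 2r`, `r ≥ 2`, if `{2,3}` is a generator of an MLCIF
`𝒜` (i.e. belongs to its canonical generating family) then `𝒜 = AHM_3`. -/
theorem stmt12 (n r : ℕ) (hr : 2 ≤ r) (hn : 2 * r ≤ n) (𝒜 : Finset (Finset ℕ))
    (hA : IsMLCIF n r 𝒜) (hgen : ({2, 3} : Finset ℕ) ∈ canonGen n r 𝒜) :
    𝒜 = AHM n r 3 := by
  classical
  obtain ⟨⟨hsub, hint, hlc⟩, -⟩ := hA
  have hpot : PotGen n r 𝒜 {2, 3} := by
    simp only [canonGen, Finset.mem_filter] at hgen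
    exact hgen.2.1
  have hn4 : 4 ≤ n := by omega
  have hIcc : Finset.Icc 2 3 = ({2, 3} : Finset ℕ) := by decide
  have hmem23 : ∀ x : ℕ, x ∈ ({2, 3} : Finset ℕ) ↔ x = 2 ∨ x = 3 := by
    intro x; simp
  -- every member of 𝒜 meets {2,3}
  have meets : ∀ C ∈ 𝒜, (C ∩ ({2, 3} : Finset ℕ)).Nonempty := by
    intro C hC
    by_contra hdisj
    have h2C : (2 : ℕ) ∉ C := fun h => hdisj ⟨2, Finset.mem_inter.2 ⟨h, by simp⟩⟩
    have h3C : (3 : ℕ) ∉ C := fun h => hdisj ⟨3, Finset.mem_inter.2 ⟨h, by simp⟩⟩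
    obtain ⟨hCsub, hCcard⟩ := Finset.mem_powersetCard.1 (hsub hC)
    set S := Finset.Icc 1 n \ insert 2 (insert 3 C) with hS
    have hScard : r - 2 ≤ S.card := by
      have h1 : (insert 2 (insert 3 C)).card ≤ r + 2 := by
        calc (insert 2 (insert 3 C)).card ≤ (insert 3 C).card + 1 := Finset.card_insert_le _ _
          _ ≤ C.card + 1 + 1 := by have := Finset.card_insert_le 3 C; omega
          _ = r + 2 := by omega
      have h2 : (Finset.Icc 1 n).card - (insert 2 (insert 3 C)).card ≤ S.card :=
        Finset.le_card_sdiff _ _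
      have h3 : (Finset.Icc 1 n).card = n := by simp
      omega
    obtain ⟨T, hTS, hTcard⟩ := Finset.exists_subset_card_eq hScard
    have h2T : (2 : ℕ) ∉ T := fun h => by
      have := hTS h; rw [hS, Finset.mem_sdiff] at this
      exact this.2 (Finset.mem_insert_self _ _)
    have h3T : (3 : ℕ) ∉ T := fun h => by
      have := hTS h; rw [hS, Finset.mem_sdiff] at this
      exact this.2 (Finset.mem_insert_of_mem (Finset.mem_insert_self _ _))
    set D := insert 2 (insert 3 T) with hD
    have hDcard : D.card = r := by
      rw [hD, Finset.card_insert_of_notMem (by simp [h2T]),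
        Finset.card_insert_of_notMem h3T, hTcard]
      omega
    have hDsub : D ⊆ Finset.Icc 1 n := by
      rw [hD]
      apply Finset.insert_subset (by rw [Finset.mem_Icc]; omega)
      apply Finset.insert_subset (by rw [Finset.mem_Icc]; omega)
      exact hTS.trans (Finset.sdiff_subset)
    have hDcf : D ∈ chooseFam n r := Finset.mem_powersetCard.2 ⟨hDsub, hDcard⟩
    have hDA : D ∈ 𝒜 := hpot.2 D hDcf (by
      intro x hx
      rcases (hmem23 x).1 hx with rfl | rfl
      · exact Finset.mem_insert_self _ _
      · exact Finset.mem_insert_of_mem (Finset.mem_insert_self _ _))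
    obtain ⟨x, hx⟩ := hint C hC D hDA
    rw [Finset.mem_inter] at hx
    obtain ⟨hxC, hxD⟩ := hx
    rw [hD, Finset.mem_insert, Finset.mem_insert] at hxD
    rcases hxD with rfl | rfl | hxT
    · exact h2C hxC
    · exact h3C hxC
    · have := hTS hxT
      rw [hS, Finset.mem_sdiff] at this
      exact this.2 (Finset.mem_insert_of_mem (Finset.mem_insert_of_mem hxC))
  ext A
  constructor
  · -- 𝒜 ⊆ AHM
    intro hAm
    have hcf := hsub hAm
    obtain ⟨hAsub, hAcard⟩ := Finset.mem_powersetCard.1 hcf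
    rw [AHM, Finset.mem_filter, hIcc]
    refine ⟨hcf, ?_⟩
    have hmeet := meets A hAm
    by_cases h1 : (1 : ℕ) ∈ A
    · exact Or.inl ⟨h1, hmeet⟩
    · right
      -- exactly-one case is impossible
      have key : ∀ x o : ℕ, x ∈ A → o ∉ A → (x = 2 ∨ x = 3) → (o = 2 ∨ o = 3) →
          x ≠ o → False := by
        intro x o hxA hoA hx2 ho2 hxo
        have hx1 : x ≠ 1 := by omega
        set C := insert 1 (A.erase x) with hC
        have h1e : (1 : ℕ) ∉ A.erase x := fun h => h1 (Finset.mem_of_mem_erase h)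
        have hCcard : C.card = r := by
          rw [hC, Finset.card_insert_of_notMem h1e, Finset.card_erase_of_mem hxA, hAcard]
          omega
        have hCsub : C ⊆ Finset.Icc 1 n := by
          rw [hC]
          apply Finset.insert_subset (by rw [Finset.mem_Icc]; omega)
          exact (Finset.erase_subset _ _).trans hAsub
        have hCcf : C ∈ chooseFam n r := Finset.mem_powersetCard.2 ⟨hCsub, hCcard⟩
        have hxC : x ∉ C := by
          rw [hC, Finset.mem_insert]
          push_neg
          exact ⟨hx1, Finset.notMem_erase x A⟩
        have h1C : (1 : ℕ) ∈ C := Finset.mem_insert_self _ _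
        have hEq : insert x (C.erase 1) = A := by
          rw [hC, Finset.erase_insert h1e, Finset.insert_erase hxA]
        have hdom : DomLE C A := by
          have := domLE_swap C x 1 h1C hxC (by omega)
          rwa [hEq] at this
        have hCA : C ∈ 𝒜 := hlc A hAm C hCcf hdom
        obtain ⟨z, hz⟩ := meets C hCA
        rw [Finset.mem_inter] at hz
        obtain ⟨hzC, hz23⟩ := hz
        rw [hC, Finset.mem_insert] at hzC
        rcases hzC with rfl | hzE
        · rcases (hmem23 1).1 hz23 with h | h <;> omega
        · have hzA : z ∈ A := Finset.mem_of_mem_erase hzE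
          have hzx : z ≠ x := Finset.ne_of_mem_erase hzE
          have hzo : z = o := by
            rcases (hmem23 z).1 hz23 with rfl | rfl <;> omega
          exact hoA (hzo ▸ hzA)
      obtain ⟨x, hx⟩ := hmeet
      rw [Finset.mem_inter] at hx
      obtain ⟨hxA, hx23⟩ := hx
      have hx2 := (hmem23 x).1 hx23
      have h2A : (2 : ℕ) ∈ A := by
        by_contra h2A
        rcases hx2 with rfl | rfl
        · exact h2A hxA
        · exact key 3 2 hxA h2A (Or.inr rfl) (Or.inl rfl) (by omega)
      have h3A : (3 : ℕ) ∈ A := by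
        by_contra h3A
        exact key 2 3 h2A h3A (Or.inl rfl) (Or.inr rfl) (by omega)
      intro y hy
      rcases (hmem23 y).1 hy with rfl | rfl
      · exact h2A
      · exact h3A
  · -- AHM ⊆ 𝒜
    intro hAm
    rw [AHM, Finset.mem_filter, hIcc] at hAm
    obtain ⟨hcf, hcond⟩ := hAm
    obtain ⟨hAsub, hAcard⟩ := Finset.mem_powersetCard.1 hcf
    rcases hcond with ⟨h1, hmeet⟩ | hsub23
    · obtain ⟨x, hx⟩ := hmeet
      rw [Finset.mem_inter] at hx
      obtain ⟨hxA, hx23⟩ := hx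
      have hx2 := (hmem23 x).1 hx23
      -- let o be the other element of {2,3}
      set o : ℕ := if x = 2 then 3 else 2 with ho
      have ho2 : o = 2 ∨ o = 3 := by rcases hx2 with rfl | rfl <;> simp [ho]
      have hxo : x ≠ o := by rcases hx2 with rfl | rfl <;> simp [ho]
      by_cases hoA : o ∈ A
      · -- both 2 and 3 in A
        apply hpot.2 A hcf
        intro y hy
        rcases (hmem23 y).1 hy with rfl | rfl
        · rcases hx2 with rfl | rfl
          · exact hxA
          · rcases ho2 with h' | h' <;> [exact h' ▸ hoA; omega]
        · rcases hx2 with rfl | rfl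
          · rcases ho2 with h' | h' <;> [omega; exact h' ▸ hoA]
          · exact hxA
      · -- replace 1 by o
        set A' := insert o (A.erase 1) with hA'
        have h1e : o ∉ A.erase 1 := fun h => hoA (Finset.mem_of_mem_erase h)
        have hA'card : A'.card = r := by
          rw [hA', Finset.card_insert_of_notMem h1e, Finset.card_erase_of_mem h1, hAcard]
          omega
        have hA'sub : A' ⊆ Finset.Icc 1 n := by
          rw [hA']
          apply Finset.insert_subset (by rw [Finset.mem_Icc]; omega)
          exact (Finset.erase_subset _ _).trans hAsub
        have hA'cf : A' ∈ chooseFam n r := Finset.mem_powersetCard.2 ⟨hA'sub, hA'card⟩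
        have hA'A : A' ∈ 𝒜 := by
          apply hpot.2 A' hA'cf
          intro y hy
          have hxA' : x ∈ A' := by
            rw [hA', Finset.mem_insert]
            right
            exact Finset.mem_erase.2 ⟨by omega, hxA⟩
          have hoA' : o ∈ A' := Finset.mem_insert_self _ _
          rcases (hmem23 y).1 hy with rfl | rfl
          · rcases hx2 with rfl | rfl
            · exact hxA'
            · rcases ho2 with h' | h' <;> [exact h' ▸ hoA'; omega]
          · rcases hx2 with rfl | rfl
            · rcases ho2 with h' | h' <;> [omega; exact h' ▸ hoA']
            · exact hxA'
        have hdom : DomLE A A' := by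
          rw [hA']
          exact domLE_swap A o 1 h1 hoA (by omega)
        exact hlc A' hA'A A hcf hdom
    · exact hpot.2 A hcf (by rwa [← hIcc] at hsub23)
end

section
/- Let n ≥ 2r with r ≥ 2, and let 𝒜 ⊆ ([n] choose r) be an MLCIF of rank 2. Then either 𝒜 = AHM_3, or there exists an integer j with 2 ≤ j ≤ r+1 such that the generators of 𝒜 of size two are precisely the sets {1,2}, {1,3}, ..., {1,j} (i.e. 𝒜 ∈ I_j). -/
open Finset

-- ===== auxiliary lemmas =====

lemma sort_get_le_iff (s : Finset ℕ) (m i : ℕ) (h : i < (s.sort (· ≤ ·)).length) :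
    (s.sort (· ≤ ·)).get ⟨i, h⟩ ≤ m ↔ i < (s.filter (· ≤ m)).card := by
  set l := s.sort (· ≤ ·) with hl
  constructor
  · intro hle
    have hsub : (l.take (i+1)).toFinset ⊆ s.filter (· ≤ m) := by
      intro x hx
      rw [List.mem_toFinset, List.mem_take_iff_getElem] at hx
      obtain ⟨j, hj, hx⟩ := hx
      have hj' : j < l.length := lt_of_lt_of_le hj (min_le_right _ _)
      have hmem : x ∈ s := by
        rw [← Finset.mem_sort (α := ℕ) (· ≤ ·)]
        exact hx ▸ List.getElem_mem hj'
      have hje : j ≤ i := Nat.lt_succ_iff.mp (lt_of_lt_of_le hj (min_le_left _ _))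
      have : l.get ⟨j, hj'⟩ ≤ l.get ⟨i, h⟩ :=
        (Finset.pairwise_sort s (· ≤ ·)).rel_get_of_le (by exact hje)
      rw [Finset.mem_filter]
      exact ⟨hmem, le_trans (by simpa [hx] using this) hle⟩
    have hcard : (l.take (i+1)).toFinset.card = i + 1 := by
      rw [List.toFinset_card_of_nodup ((List.take_sublist _ _).nodup (Finset.sort_nodup s _))]
      rw [List.length_take]
      omega
    have := Finset.card_le_card hsub
    omega
  · intro hcd
    by_contra hgt
    push_neg at hgt
    have hgt' : m < l.get ⟨i, h⟩ := hgt
    have hsub : s.filter (· ≤ m) ⊆ (l.take i).toFinset := by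
      intro x hx
      rw [Finset.mem_filter] at hx
      have hxl : x ∈ l := (Finset.mem_sort (α := ℕ) (· ≤ ·)).2 hx.1
      obtain ⟨⟨j, hj⟩, hget⟩ := List.mem_iff_get.mp hxl
      have hji : j < i := by
        by_contra hji
        push_neg at hji
        have : l.get ⟨i, h⟩ ≤ l.get ⟨j, hj⟩ :=
          (Finset.pairwise_sort s (· ≤ ·)).rel_get_of_le (by exact hji)
        rw [hget] at this
        have := hx.2
        omega
      rw [List.mem_toFinset, List.mem_take_iff_getElem]
      exact ⟨j, by omega, by simpa using hget⟩
    have h1 := Finset.card_le_card hsub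
    have h2 := List.toFinset_card_le (l.take i)
    rw [List.length_take] at h2
    omega

lemma domle_iff (B A : Finset ℕ) :
    DomLE B A ↔ (B.card = A.card ∧
      ∀ k, (A.filter (· ≤ k)).card ≤ (B.filter (· ≤ k)).card) := by
  constructor
  · rintro ⟨hc, hg⟩
    refine ⟨hc, fun k => ?_⟩
    rcases Nat.eq_zero_or_pos ((A.filter (· ≤ k)).card) with h0 | hpos
    · omega
    · set i := (A.filter (· ≤ k)).card - 1 with hi
      have hle : (A.filter (· ≤ k)).card ≤ A.card :=
        Finset.card_le_card (Finset.filter_subset _ _)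
      have hiA : i < (A.sort (· ≤ ·)).length := by
        rw [Finset.length_sort]; omega
      have hiB : i < (B.sort (· ≤ ·)).length := by
        rw [Finset.length_sort]
        rw [Finset.length_sort] at hiA
        omega
      have h1 : (A.sort (· ≤ ·)).get ⟨i, hiA⟩ ≤ k :=
        (sort_get_le_iff A k i hiA).2 (by omega)
      have h2 := hg i hiB hiA
      have := (sort_get_le_iff B k i hiB).1 (le_trans h2 h1)
      omega
  · rintro ⟨hc, hcnt⟩
    refine ⟨hc, fun i hB hA => ?_⟩
    set m := (A.sort (· ≤ ·)).get ⟨i, hA⟩ with hm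
    have h1 : i < (A.filter (· ≤ m)).card := (sort_get_le_iff A m i hA).1 le_rfl
    exact (sort_get_le_iff B m i hB).2 (lt_of_lt_of_le h1 (hcnt m))

lemma domle_refl (A : Finset ℕ) : DomLE A A := ⟨rfl, fun i hB hA => le_refl _⟩

lemma domle_trans {A B C : Finset ℕ} (h1 : DomLE A B) (h2 : DomLE B C) : DomLE A C := by
  rw [domle_iff] at h1 h2 ⊢
  exact ⟨h1.1.trans h2.1, fun k => le_trans (h2.2 k) (h1.2 k)⟩

lemma one_mem_of_domle {C A : Finset ℕ} (h : DomLE C A) (h1 : 1 ∈ A)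
    (hC : ∀ x ∈ C, 1 ≤ x) : 1 ∈ C := by
  rw [domle_iff] at h
  have h2 := h.2 1
  have hA1 : 0 < (A.filter (· ≤ 1)).card :=
    Finset.card_pos.2 ⟨1, Finset.mem_filter.2 ⟨h1, le_refl _⟩⟩
  have hC1 : 0 < (C.filter (· ≤ 1)).card := lt_of_lt_of_le hA1 h2
  obtain ⟨x, hx⟩ := Finset.card_pos.1 hC1
  rw [Finset.mem_filter] at hx
  have := hC x hx.1
  have : x = 1 := by omega
  exact this ▸ hx.1

lemma mem_chooseFam {n r : ℕ} {A : Finset ℕ} :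
    A ∈ chooseFam n r ↔ A ⊆ Finset.Icc 1 n ∧ A.card = r := Finset.mem_powersetCard

lemma domle_replace {A : Finset ℕ} {c a : ℕ} (hc : c ∈ A) (ha : a ∉ A) (hca : c ≤ a) :
    DomLE A (insert a (A.erase c)) := by
  rw [domle_iff]
  have hanotE : a ∉ A.erase c := fun h => ha (Finset.mem_of_mem_erase h)
  have hcnotE : c ∉ A.erase c := Finset.notMem_erase _ _
  have hAeq : A = insert c (A.erase c) := (Finset.insert_erase hc).symm
  constructor
  · rw [Finset.card_insert_of_notMem hanotE, Finset.card_erase_of_mem hc]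
    have : 1 ≤ A.card := Finset.card_pos.2 ⟨c, hc⟩
    omega
  · intro k
    conv_rhs => rw [hAeq]
    rw [Finset.filter_insert, Finset.filter_insert]
    by_cases hak : a ≤ k
    · have hck : c ≤ k := le_trans hca hak
      rw [if_pos hak, if_pos hck,
        Finset.card_insert_of_notMem (fun h => hanotE (Finset.mem_of_mem_filter _ h)),
        Finset.card_insert_of_notMem (fun h => hcnotE (Finset.mem_of_mem_filter _ h))]
    · rw [if_neg hak]
      split_ifs with hck
      · exact le_trans (Finset.card_le_card (Finset.subset_insert _ _)) (le_refl _)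
      · exact le_refl _

lemma choose_replace {n r : ℕ} {A : Finset ℕ} {c a : ℕ} (hA : A ∈ chooseFam n r)
    (hc : c ∈ A) (ha : a ∉ A) (han : a ∈ Finset.Icc 1 n) :
    insert a (A.erase c) ∈ chooseFam n r := by
  rw [mem_chooseFam] at hA ⊢
  refine ⟨Finset.insert_subset han ((Finset.erase_subset _ _).trans hA.1), ?_⟩
  rw [Finset.card_insert_of_notMem (fun h => ha (Finset.mem_of_mem_erase h)),
    Finset.card_erase_of_mem hc]
  have : 1 ≤ A.card := Finset.card_pos.2 ⟨c, hc⟩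
  omega

lemma potgen_down {n r : ℕ} {𝒜 : Finset (Finset ℕ)} (hL : IsLCIF n r 𝒜)
    {a b c d : ℕ} (hcd : c < d) (hca : c ≤ a) (hdb : d ≤ b) (hab : a < b) (hc1 : 1 ≤ c)
    (hg : PotGen n r 𝒜 {a, b}) : PotGen n r 𝒜 {c, d} := by
  classical
  have han : a ∈ Finset.Icc 1 n := hg.1 (by simp)
  have hbn : b ∈ Finset.Icc 1 n := hg.1 (by simp)
  rw [Finset.mem_Icc] at han hbn
  refine ⟨?_, ?_⟩
  · intro x hx
    rw [Finset.mem_insert, Finset.mem_singleton] at hx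
    rw [Finset.mem_Icc]
    rcases hx with rfl | rfl <;> omega
  · intro A hAc hsubA
    have hcA : c ∈ A := hsubA (by simp)
    have hdA : d ∈ A := hsubA (by simp)
    have key1 : ∃ A1 ∈ chooseFam n r, DomLE A A1 ∧ b ∈ A1 ∧ c ∈ A1 := by
      by_cases hbA : b ∈ A
      · exact ⟨A, hAc, domle_refl A, hbA, hcA⟩
      · refine ⟨insert b (A.erase d),
          choose_replace hAc hdA hbA (Finset.mem_Icc.2 (by omega)),
          domle_replace hdA hbA hdb, Finset.mem_insert_self _ _, ?_⟩
        exact Finset.mem_insert_of_mem (Finset.mem_erase.2 ⟨by omega, hcA⟩)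
    obtain ⟨A1, hA1c, hd1, hbA1, hcA1⟩ := key1
    have key2 : ∃ A2 ∈ chooseFam n r, DomLE A1 A2 ∧ a ∈ A2 ∧ b ∈ A2 := by
      by_cases haA : a ∈ A1
      · exact ⟨A1, hA1c, domle_refl A1, haA, hbA1⟩
      · refine ⟨insert a (A1.erase c),
          choose_replace hA1c hcA1 haA (Finset.mem_Icc.2 (by omega)),
          domle_replace hcA1 haA hca, Finset.mem_insert_self _ _, ?_⟩
        exact Finset.mem_insert_of_mem (Finset.mem_erase.2 ⟨by omega, hbA1⟩)
    obtain ⟨A2, hA2c, hd2, haA2, hbA2⟩ := key2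
    have hA2𝒜 : A2 ∈ 𝒜 := by
      refine hg.2 A2 hA2c ?_
      intro x hx
      rw [Finset.mem_insert, Finset.mem_singleton] at hx
      rcases hx with rfl | rfl
      · exact haA2
      · exact hbA2
    exact hL.2.2 A2 hA2𝒜 A hAc (domle_trans hd1 hd2)

lemma potgen_witness {n r : ℕ} {𝒜 : Finset (Finset ℕ)} (hr : 2 ≤ r) (hn : 2 * r ≤ n)
    (hsub : 𝒜 ⊆ chooseFam n r) (hint : IntersectingFam 𝒜) {u v : ℕ} (huv : u ≠ v)
    (hg : PotGen n r 𝒜 {u, v}) {A : Finset ℕ} (hA : A ∈ 𝒜) (hu : u ∉ A) (hv : v ∉ A) :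
    False := by
  classical
  have hAc := mem_chooseFam.1 (hsub hA)
  set T := (Finset.Icc 1 n) \ (A ∪ {u, v}) with hT
  have hTcard : r - 2 ≤ T.card := by
    have h1 : (Finset.Icc 1 n).card - (A ∪ ({u, v} : Finset ℕ)).card ≤ T.card := by
      rw [hT]; exact Finset.le_card_sdiff _ _
    have h2 : (A ∪ ({u, v} : Finset ℕ)).card ≤ r + 2 := by
      have h3 := Finset.card_union_le A ({u, v} : Finset ℕ)
      have hle2 : ({u, v} : Finset ℕ).card ≤ 2 := Finset.card_insert_le _ _ |>.trans (by simp)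
      have hA2 := hAc.2
      omega
    rw [Nat.card_Icc] at h1
    omega
  obtain ⟨S, hST, hScard⟩ := Finset.exists_subset_card_eq hTcard
  set B := ({u, v} : Finset ℕ) ∪ S with hB
  have hdisjS : Disjoint ({u, v} : Finset ℕ) S := by
    rw [Finset.disjoint_left]
    intro x hx hxS
    have := hST hxS
    rw [hT, Finset.mem_sdiff] at this
    exact this.2 (Finset.mem_union_right _ hx)
  have hBcard : B.card = r := by
    rw [hB, Finset.card_union_of_disjoint hdisjS, Finset.card_pair huv, hScard]
    omega
  have hBsub : B ⊆ Finset.Icc 1 n := by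
    rw [hB]
    refine Finset.union_subset hg.1 ?_
    intro x hx
    exact (Finset.mem_sdiff.1 (hST hx)).1
  have hB𝒜 : B ∈ 𝒜 := hg.2 B (mem_chooseFam.2 ⟨hBsub, hBcard⟩) (Finset.subset_union_left)
  obtain ⟨x, hx⟩ := hint A hA B hB𝒜
  rw [Finset.mem_inter] at hx
  obtain ⟨hxA, hxB⟩ := hx
  rw [hB, Finset.mem_union] at hxB
  rcases hxB with hxuv | hxS
  · rw [Finset.mem_insert, Finset.mem_singleton] at hxuv
    rcases hxuv with rfl | rfl
    · exact hu hxA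
    · exact hv hxA
  · exact (Finset.mem_sdiff.1 (hST hxS)).2 (Finset.mem_union_left _ hxA)

lemma mem_canonGen {n r : ℕ} {𝒜 : Finset (Finset ℕ)} {G : Finset ℕ} :
    G ∈ canonGen n r 𝒜 ↔
      PotGen n r 𝒜 G ∧ ∀ G' ⊆ G, PotGen n r 𝒜 G' → G' = G := by
  classical
  rw [canonGen, Finset.mem_filter, Finset.mem_powerset]
  constructor
  · rintro ⟨-, h⟩; exact h
  · rintro h; exact ⟨h.1.1, h⟩

lemma rank_facts {n r : ℕ} {𝒜 : Finset (Finset ℕ)} (hrank : rankFam n r 𝒜 = 2) :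
    (¬ PotGen n r 𝒜 ∅) ∧ (∀ a, ¬ PotGen n r 𝒜 {a}) ∧
      ∃ G ∈ canonGen n r 𝒜, G.card = 2 := by
  classical
  set Sset := {k : ℕ | ∃ G ∈ canonGen n r 𝒜, G.card = k} with hS
  have hrank' : sInf Sset = 2 := hrank
  have hne : Sset.Nonempty := by
    by_contra h
    rw [Set.not_nonempty_iff_eq_empty] at h
    rw [h, Nat.sInf_empty] at hrank'
    omega
  have hmem2 : ∃ G ∈ canonGen n r 𝒜, G.card = 2 := by
    have := Nat.sInf_mem hne
    rw [hrank'] at this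
    exact this
  have hempty : ¬ PotGen n r 𝒜 ∅ := by
    intro hpg
    have hmem : (∅ : Finset ℕ) ∈ canonGen n r 𝒜 := by
      rw [mem_canonGen]
      exact ⟨hpg, fun G' hG' _ => Finset.subset_empty.1 hG'⟩
    have : (0 : ℕ) ∈ Sset := ⟨∅, hmem, Finset.card_empty⟩
    have := Nat.sInf_le this
    omega
  refine ⟨hempty, ?_, hmem2⟩
  intro a hpg
  have hmem : ({a} : Finset ℕ) ∈ canonGen n r 𝒜 := by
    rw [mem_canonGen]
    refine ⟨hpg, fun G' hG' hpg' => ?_⟩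
    rcases Finset.subset_singleton_iff.1 hG' with rfl | rfl
    · exact absurd hpg' hempty
    · rfl
  have : (1 : ℕ) ∈ Sset := ⟨{a}, hmem, Finset.card_singleton _⟩
  have := Nat.sInf_le this
  omega

lemma pair_mem_canonGen {n r : ℕ} {𝒜 : Finset (Finset ℕ)} {x y : ℕ} (hxy : x ≠ y)
    (hg : PotGen n r 𝒜 {x, y}) (hempty : ¬ PotGen n r 𝒜 ∅)
    (hsingle : ∀ a, ¬ PotGen n r 𝒜 {a}) : {x, y} ∈ canonGen n r 𝒜 := by
  rw [mem_canonGen]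
  refine ⟨hg, fun G' hG' hpg' => ?_⟩
  have hcard2 : ({x, y} : Finset ℕ).card = 2 := Finset.card_pair hxy
  have hle : G'.card ≤ 2 := hcard2 ▸ Finset.card_le_card hG'
  interval_cases h : G'.card
  · exact absurd hpg' (by rw [Finset.card_eq_zero.1 h]; exact hempty)
  · obtain ⟨a, rfl⟩ := Finset.card_eq_one.1 h
    exact absurd hpg' (hsingle a)
  · exact Finset.eq_of_subset_of_card_le hG' (by omega)

lemma exists_B_no_one {n r : ℕ} {𝒜 : Finset (Finset ℕ)} (hA : IsMLCIF n r 𝒜)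
    (hn1 : 1 ≤ n) (hnot1 : ¬ PotGen n r 𝒜 {1}) : ∃ B ∈ 𝒜, 1 ∉ B := by
  classical
  by_contra hcon
  push_neg at hcon
  have hsubIcc : ({1} : Finset ℕ) ⊆ Finset.Icc 1 n := by
    simp [Finset.singleton_subset_iff, Finset.mem_Icc, hn1]
  rw [PotGen, not_and] at hnot1
  have := hnot1 hsubIcc
  push_neg at this
  obtain ⟨A0, hA0c, hA0sub, hA0not⟩ := this
  have h1A0 : 1 ∈ A0 := hA0sub (Finset.mem_singleton_self 1)
  set ℬ := 𝒜 ∪ (chooseFam n r).filter (fun C => DomLE C A0) with hℬ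
  have hmem1 : ∀ X ∈ ℬ, 1 ∈ X := by
    intro X hX
    rw [hℬ, Finset.mem_union, Finset.mem_filter] at hX
    rcases hX with h | ⟨hXc, hdom⟩
    · exact hcon X h
    · exact one_mem_of_domle hdom h1A0
        (fun x hx => (Finset.mem_Icc.1 ((mem_chooseFam.1 hXc).1 hx)).1)
  have hlcif : IsLCIF n r ℬ := by
    refine ⟨Finset.union_subset hA.1.1 (Finset.filter_subset _ _),
      fun X hX Y hY => ⟨1, Finset.mem_inter.2 ⟨hmem1 X hX, hmem1 Y hY⟩⟩,
      fun X hX Y hYc hdom => ?_⟩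
    rw [hℬ, Finset.mem_union, Finset.mem_filter] at hX ⊢
    rcases hX with h | ⟨hXc, hX⟩
    · exact Or.inl (hA.1.2.2 X h Y hYc hdom)
    · exact Or.inr ⟨hYc, domle_trans hdom hX⟩
  have heq := hA.2 ℬ hlcif Finset.subset_union_left
  have : A0 ∈ ℬ := by
    rw [hℬ, Finset.mem_union, Finset.mem_filter]
    exact Or.inr ⟨hA0c, domle_refl A0⟩
  rw [heq] at this
  exact hA0not this

lemma icc_domle {n r : ℕ} (hr : 2 ≤ r) {B : Finset ℕ} (hB : B.card = r)
    (hBsub : B ⊆ Finset.Icc 2 n) : DomLE (Finset.Icc 2 (r + 1)) B := by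
  rw [domle_iff]
  constructor
  · rw [Nat.card_Icc, hB]; omega
  · intro k
    have hsub1 : B.filter (· ≤ k) ⊆ Finset.Icc 2 k := by
      intro x hx
      rw [Finset.mem_filter] at hx
      rw [Finset.mem_Icc]
      exact ⟨(Finset.mem_Icc.1 (hBsub hx.1)).1, hx.2⟩
    have h1 : (B.filter (· ≤ k)).card ≤ k - 1 := by
      have := Finset.card_le_card hsub1
      rw [Nat.card_Icc] at this
      omega
    have h2 : (B.filter (· ≤ k)).card ≤ r := by
      have := Finset.card_le_card (Finset.filter_subset (· ≤ k) B)
      omega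
    have h3 : (Finset.Icc 2 (r + 1)).filter (· ≤ k) = Finset.Icc 2 (min (r + 1) k) := by
      ext x
      simp only [Finset.mem_filter, Finset.mem_Icc, le_min_iff]
      omega
    rw [h3, Nat.card_Icc]
    omega

lemma icc_mem_of_no_one {n r : ℕ} {𝒜 : Finset (Finset ℕ)} (hr : 2 ≤ r) (hn : 2 * r ≤ n)
    (hL : IsLCIF n r 𝒜) {B : Finset ℕ} (hB : B ∈ 𝒜) (h1B : 1 ∉ B) :
    Finset.Icc 2 (r + 1) ∈ 𝒜 := by
  have hBc := mem_chooseFam.1 (hL.1 hB)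
  have hBsub : B ⊆ Finset.Icc 2 n := by
    intro x hx
    have := Finset.mem_Icc.1 (hBc.1 hx)
    rw [Finset.mem_Icc]
    have : x ≠ 1 := fun h => h1B (h ▸ hx)
    omega
  have hIc : Finset.Icc 2 (r + 1) ∈ chooseFam n r := by
    rw [mem_chooseFam]
    constructor
    · intro x hx
      rw [Finset.mem_Icc] at hx ⊢
      omega
    · rw [Nat.card_Icc]; omega
  exact hL.2.2 B hB _ hIc (icc_domle hr hBc.2 hBsub)

lemma potgen_one_bound {n r : ℕ} {𝒜 : Finset (Finset ℕ)} (hr : 2 ≤ r) (hn : 2 * r ≤ n)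
    (hA : IsMLCIF n r 𝒜) (hrank : rankFam n r 𝒜 = 2) {j : ℕ} (hj : j ≠ 1)
    (hg : PotGen n r 𝒜 {1, j}) : j ≤ r + 1 := by
  by_contra hbig
  push_neg at hbig
  obtain ⟨hempty, hsingle, -⟩ := rank_facts hrank
  obtain ⟨B, hB, h1B⟩ := exists_B_no_one hA (by omega) (hsingle 1)
  have hI : Finset.Icc 2 (r + 1) ∈ 𝒜 := icc_mem_of_no_one hr hn hA.1 hB h1B
  refine potgen_witness hr hn hA.1.1 hA.1.2.1 (Ne.symm hj) hg hI ?_ ?_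
  · rw [Finset.mem_Icc]; omega
  · rw [Finset.mem_Icc]; omega

/-- For `n ≥ 2r`, `r ≥ 2`, every MLCIF `𝒜` of rank 2 satisfies
either `𝒜 = AHM_3` or `𝒜 ∈ I_j` for some `2 ≤ j ≤ r + 1`. -/
theorem stmt13 (n r : ℕ) (hr : 2 ≤ r) (hn : 2 * r ≤ n) (𝒜 : Finset (Finset ℕ))
    (hA : IsMLCIF n r 𝒜) (hrank : rankFam n r 𝒜 = 2) :
    𝒜 = AHM n r 3 ∨ ∃ j : ℕ, 2 ≤ j ∧ j ≤ r + 1 ∧ MemI n r j 𝒜 := by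
  classical
  obtain ⟨hempty, hsingle, G2, hG2mem, hG2card⟩ := rank_facts hrank
  have hIcc23 : Finset.Icc 2 3 = ({2, 3} : Finset ℕ) := by
    ext x
    simp only [Finset.mem_Icc, Finset.mem_insert, Finset.mem_singleton]
    omega
  by_cases h23 : PotGen n r 𝒜 {2, 3}
  · left
    have h12 : PotGen n r 𝒜 {1, 2} :=
      potgen_down hA.1 (by omega) (by omega) (by omega) (by omega) (by omega) h23
    have h13 : PotGen n r 𝒜 {1, 3} :=
      potgen_down hA.1 (by omega) (by omega) (by omega) (by omega) (by omega) h23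
    ext A
    rw [AHM, Finset.mem_filter]
    constructor
    · intro hA𝒜
      refine ⟨hA.1.1 hA𝒜, ?_⟩
      by_contra hcon
      push_neg at hcon
      obtain ⟨hc1, hc2⟩ := hcon
      by_cases h1 : 1 ∈ A
      · have hnone : ¬ (A ∩ Finset.Icc 2 3).Nonempty := by
            rw [Finset.not_nonempty_iff_eq_empty]; exact hc1 h1
        have h2 : 2 ∉ A := fun h2 =>
          hnone ⟨2, Finset.mem_inter.2 ⟨h2, by rw [Finset.mem_Icc]; omega⟩⟩
        have h3 : 3 ∉ A := fun h3 =>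
          hnone ⟨3, Finset.mem_inter.2 ⟨h3, by rw [Finset.mem_Icc]; omega⟩⟩
        exact potgen_witness hr hn hA.1.1 hA.1.2.1 (by omega) h23 hA𝒜 h2 h3
      · by_cases h2 : 2 ∈ A
        · have h3 : 3 ∉ A := by
            intro h3
            apply hc2
            intro x hx
            rw [Finset.mem_Icc] at hx
            obtain ⟨hxa, hxb⟩ := hx
            interval_cases x
            exacts [h2, h3]
          exact potgen_witness hr hn hA.1.1 hA.1.2.1 (by omega) h13 hA𝒜 h1 h3
        · exact potgen_witness hr hn hA.1.1 hA.1.2.1 (by omega) h12 hA𝒜 h1 h2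
    · rintro ⟨hAc, ⟨h1, hne⟩ | hsub⟩
      · obtain ⟨x, hx⟩ := hne
        rw [Finset.mem_inter] at hx
        have hx2 := hx.2
        rw [hIcc23, Finset.mem_insert, Finset.mem_singleton] at hx2
        rcases hx2 with rfl | rfl
        · exact h12.2 A hAc (Finset.insert_subset h1 (Finset.singleton_subset_iff.2 hx.1))
        · exact h13.2 A hAc (Finset.insert_subset h1 (Finset.singleton_subset_iff.2 hx.1))
      · exact h23.2 A hAc (by rw [← hIcc23]; exact hsub)
  · right
    have hpair1 : ∀ x y : ℕ, x ≠ y → PotGen n r 𝒜 {x, y} → (x = 1 ∨ y = 1) := by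
      intro x y hxy hg
      by_contra hcon
      push_neg at hcon
      have hx1 : 1 ≤ x := (Finset.mem_Icc.1 (hg.1 (by simp))).1
      have hy1 : 1 ≤ y := (Finset.mem_Icc.1 (hg.1 (by simp))).1
      rcases lt_or_gt_of_ne hxy with h | h
      · exact h23 (potgen_down hA.1 (show (2:ℕ) < 3 by omega) (by omega) (by omega) h
          (by omega) hg)
      · rw [Finset.pair_comm] at hg
        exact h23 (potgen_down hA.1 (show (2:ℕ) < 3 by omega) (by omega) (by omega) h
          (by omega) hg)
    obtain ⟨x0, y0, hxy0, hG2eq⟩ := Finset.card_eq_two.1 hG2card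
    have hG2pot : PotGen n r 𝒜 {x0, y0} := hG2eq ▸ (mem_canonGen.1 hG2mem).1
    have hi0 : ∃ i0, i0 ≠ 1 ∧ PotGen n r 𝒜 {1, i0} := by
      rcases hpair1 x0 y0 hxy0 hG2pot with rfl | rfl
      · exact ⟨y0, Ne.symm hxy0, hG2pot⟩
      · exact ⟨x0, hxy0, by rw [Finset.pair_comm] at hG2pot; exact hG2pot⟩
    obtain ⟨i0, hi0ne, hi0pot⟩ := hi0
    set F := (Finset.Icc 2 (r + 1)).filter (fun i => PotGen n r 𝒜 {1, i}) with hF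
    have hi0F : i0 ∈ F := by
      rw [hF, Finset.mem_filter, Finset.mem_Icc]
      have h1i : 1 ≤ i0 := (Finset.mem_Icc.1 (hi0pot.1 (by simp))).1
      exact ⟨⟨by omega, potgen_one_bound hr hn hA hrank hi0ne hi0pot⟩, hi0pot⟩
    have hFne : F.Nonempty := ⟨i0, hi0F⟩
    have hjF := F.max'_mem hFne
    obtain ⟨hjIcc, hjpot⟩ := Finset.mem_filter.1 hjF
    have hjIcc' := Finset.mem_Icc.1 hjIcc
    set j := F.max' hFne with hjdef
    refine ⟨j, hjIcc'.1, hjIcc'.2, hA, hrank, ?_⟩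
    have key : ∀ z : ℕ, z ≠ 1 → PotGen n r 𝒜 {1, z} → (2 ≤ z ∧ z ≤ j) := by
      intro z hz hpotz
      have h1z : 1 ≤ z := (Finset.mem_Icc.1 (hpotz.1 (by simp))).1
      have hzb := potgen_one_bound hr hn hA hrank hz hpotz
      have hzF : z ∈ F := by
        rw [hF, Finset.mem_filter, Finset.mem_Icc]
        exact ⟨⟨by omega, hzb⟩, hpotz⟩
      exact ⟨by omega, Finset.le_max' F z hzF⟩
    ext H
    simp only [Finset.mem_filter, Finset.mem_image, Finset.mem_Icc]
    constructor
    · rintro ⟨hHmem, hH2⟩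
      obtain ⟨x, y, hxy, rfl⟩ := Finset.card_eq_two.1 hH2
      have hpot : PotGen n r 𝒜 {x, y} := (mem_canonGen.1 hHmem).1
      rcases hpair1 x y hxy hpot with rfl | rfl
      · exact ⟨y, key y (Ne.symm hxy) hpot, rfl⟩
      · refine ⟨x, key x hxy (by rw [Finset.pair_comm] at hpot; exact hpot), ?_⟩
        exact Finset.pair_comm 1 x
    · rintro ⟨i, ⟨h2i, hij⟩, rfl⟩
      have hjpot : PotGen n r 𝒜 {1, j} := hjpot
      have hipot : PotGen n r 𝒜 {1, i} :=
        potgen_down hA.1 (show (1:ℕ) < i by omega) (le_refl 1) hij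
          (show (1:ℕ) < j by omega) (le_refl 1) hjpot
      exact ⟨pair_mem_canonGen (show (1:ℕ) ≠ i by omega) hipot hempty hsingle,
        Finset.card_pair (by omega)⟩
end

section
/- For every integer r ≥ 3 there exists N such that for all n ≥ N the following holds: for every nonempty X ⊆ [2,n] with X ⊄ [2,r+1], and for every MLCIF 𝒜 ∈ ⋃_{j=2}^{r+1} I_j, we have hit_X(𝒮) > hit_X(𝒜). -/
open Finset

section Helpers

open Finset

/-- Number of elements of `s` that are at most `k`. -/
def scnt (s : Finset ℕ) (k : ℕ) : ℕ := (s.filter (· ≤ k)).card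

lemma scnt_mono (s : Finset ℕ) {k k' : ℕ} (h : k ≤ k') : scnt s k ≤ scnt s k' := by
  apply Finset.card_le_card
  intro x hx
  rw [Finset.mem_filter] at hx ⊢
  exact ⟨hx.1, hx.2.trans h⟩

lemma scnt_le_card (s : Finset ℕ) (k : ℕ) : scnt s k ≤ s.card :=
  Finset.card_filter_le _ _

lemma bridge1 (s : Finset ℕ) (i : ℕ) (hi : i < (s.sort (· ≤ ·)).length) :
    i + 1 ≤ scnt s ((s.sort (· ≤ ·)).get ⟨i, hi⟩) := by
  classical
  set l := s.sort (· ≤ ·) with hl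
  have hnd : l.Nodup := s.sort_nodup _
  have hsub : (l.take (i+1)).toFinset ⊆ s.filter (· ≤ l.get ⟨i, hi⟩) := by
    intro x hx
    rw [List.mem_toFinset] at hx
    obtain ⟨j, hj, hxe⟩ := List.getElem_of_mem hx
    have hlen : (l.take (i+1)).length = min (i+1) l.length := List.length_take
    have hjl : j < l.length := by omega
    have hji : j ≤ i := by omega
    rw [List.getElem_take] at hxe
    rw [Finset.mem_filter]
    refine ⟨?_, ?_⟩
    · rw [← hxe]
      exact (Finset.mem_sort _).1 (List.getElem_mem hjl)
    · rw [← hxe]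
      have := (s.pairwise_sort (· ≤ ·)).rel_get_of_le
        (a := ⟨j, hjl⟩) (b := ⟨i, hi⟩) (Fin.mk_le_mk.2 hji)
      simpa [List.get_eq_getElem] using this
  have hcard : (l.take (i+1)).toFinset.card = i + 1 := by
    rw [List.toFinset_card_of_nodup ((List.take_sublist _ _).nodup hnd), List.length_take]
    omega
  calc i + 1 = (l.take (i+1)).toFinset.card := hcard.symm
    _ ≤ (s.filter (· ≤ l.get ⟨i, hi⟩)).card := Finset.card_le_card hsub

lemma bridge2 (s : Finset ℕ) (k i : ℕ) (hi : i < (s.sort (· ≤ ·)).length)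
    (h : i + 1 ≤ scnt s k) : (s.sort (· ≤ ·)).get ⟨i, hi⟩ ≤ k := by
  classical
  by_contra hlt
  push_neg at hlt
  simp only [List.get_eq_getElem, Fin.val_mk] at hlt
  set l := s.sort (· ≤ ·) with hl
  have hsub : s.filter (· ≤ k) ⊆ (Finset.range i).image (fun j => l.getD j 0) := by
    intro x hx
    rw [Finset.mem_filter] at hx
    have hxl : x ∈ l := (Finset.mem_sort _).2 hx.1
    obtain ⟨j, hj, hxe⟩ := List.getElem_of_mem hxl
    have hji : j < i := by
      by_contra h'
      push_neg at h'
      have hmon := (s.pairwise_sort (· ≤ ·)).rel_get_of_le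
        (a := ⟨i, hi⟩) (b := ⟨j, hj⟩) (Fin.mk_le_mk.2 h')
      simp only [List.get_eq_getElem] at hmon
      rw [hxe] at hmon
      have := hx.2
      omega
    refine Finset.mem_image.2 ⟨j, Finset.mem_range.2 hji, ?_⟩
    rw [List.getD_eq_getElem l 0 hj, hxe]
  have hle : scnt s k ≤ i := by
    calc scnt s k ≤ ((Finset.range i).image (fun j => l.getD j 0)).card :=
          Finset.card_le_card hsub
      _ ≤ (Finset.range i).card := Finset.card_image_le
      _ = i := Finset.card_range i
  omega

lemma domle_of_scnt {B' B : Finset ℕ} (hcard : B'.card = B.card)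
    (h : ∀ k, scnt B k ≤ scnt B' k) : DomLE B' B := by
  refine ⟨hcard, fun i hB' hB => ?_⟩
  exact bridge2 B' _ i hB' ((bridge1 B i hB).trans (h _))

lemma scnt_of_domle {B' B : Finset ℕ} (h : DomLE B' B) (k : ℕ) :
    scnt B k ≤ scnt B' k := by
  rcases Nat.eq_zero_or_pos (scnt B k) with h0 | h0
  · omega
  have hlenB : scnt B k - 1 < (B.sort (· ≤ ·)).length := by
    rw [Finset.length_sort]
    have := scnt_le_card B k
    omega
  have hlenB' : scnt B k - 1 < (B'.sort (· ≤ ·)).length := by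
    rw [Finset.length_sort, h.1]
    rw [Finset.length_sort] at hlenB
    exact hlenB
  have hg : (B.sort (· ≤ ·)).get ⟨scnt B k - 1, hlenB⟩ ≤ k :=
    bridge2 B k _ hlenB (by omega)
  have hg' := h.2 (scnt B k - 1) hlenB' hlenB
  have h1 := bridge1 B' _ hlenB'
  have h2 := scnt_mono B' (hg'.trans hg)
  omega

end Helpers
lemma domle_Icc2 {n r : ℕ} {B : Finset ℕ} (hB : B ⊆ Finset.Icc 1 n)
    (h1 : 1 ∉ B) (hc : B.card = r) : DomLE (Finset.Icc 2 (r+1)) B := by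
  apply domle_of_scnt
  · rw [Nat.card_Icc, hc]; omega
  · intro k
    have h1' : scnt B k ≤ (Finset.Icc 2 k).card := by
      apply Finset.card_le_card; intro x hx; rw [Finset.mem_filter] at hx
      have hx1 := hB hx.1
      rw [Finset.mem_Icc] at hx1 ⊢
      have : x ≠ 1 := fun h => h1 (h ▸ hx.1)
      omega
    have h2' : scnt B k ≤ r := hc ▸ scnt_le_card B k
    have hrhs : scnt (Finset.Icc 2 (r+1)) k = (Finset.Icc 2 (min (r+1) k)).card := by
      unfold scnt; congr 1; ext x
      simp only [Finset.mem_Icc, Finset.mem_filter]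
      omega
    rw [Nat.card_Icc] at h1'
    rw [hrhs, Nat.card_Icc]
    omega

lemma domle_Bhat {n r M : ℕ} {B : Finset ℕ} (hr : 3 ≤ r) (hM : 3 ≤ M)
    (hB : B ⊆ Finset.Icc 1 n) (h1 : 1 ∉ B) (hc : B.card = r)
    (hsmall : (B.filter (· ≤ M)).card ≤ 2) :
    DomLE ({2,3} ∪ Finset.Icc (M+1) (M+r-2)) B := by
  have hdisj : Disjoint ({2,3} : Finset ℕ) (Finset.Icc (M+1) (M+r-2)) := by
    rw [Finset.disjoint_left]; intro x hx hx'
    rw [Finset.mem_Icc] at hx'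
    simp only [Finset.mem_insert, Finset.mem_singleton] at hx
    omega
  have hScard : ({2,3} ∪ Finset.Icc (M+1) (M+r-2) : Finset ℕ).card = r := by
    rw [Finset.card_union_of_disjoint hdisj, Nat.card_Icc, Finset.card_pair (by omega)]
    omega
  apply domle_of_scnt
  · rw [hScard, hc]
  intro k
  set S := ({2,3} ∪ Finset.Icc (M+1) (M+r-2) : Finset ℕ) with hS
  have lhs0 : k ≤ 1 → scnt B k = 0 := by
    intro hk
    unfold scnt
    rw [Finset.card_eq_zero, Finset.filter_eq_empty_iff]
    intro x hx hxk
    have hx1 := hB hx; rw [Finset.mem_Icc] at hx1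
    have : x = 1 := by omega
    exact h1 (this ▸ hx)
  have lhs2 : scnt B 2 ≤ 1 := by
    have hss : B.filter (· ≤ 2) ⊆ {2} := by
      intro x hx; rw [Finset.mem_filter] at hx
      have hx1 := hB hx.1; rw [Finset.mem_Icc] at hx1
      have hne : x ≠ 1 := fun h => h1 (h ▸ hx.1)
      have : x ≤ 2 := hx.2
      simp only [Finset.mem_singleton]
      omega
    calc scnt B 2 ≤ ({2} : Finset ℕ).card := Finset.card_le_card hss
      _ = 1 := rfl
  have lhsM : scnt B M ≤ 2 := by unfold scnt; exact hsmall
  have lhsr : scnt B k ≤ r := hc ▸ scnt_le_card B k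
  have lhsk : M ≤ k → scnt B k ≤ 2 + (k - M) := by
    intro hk
    have hsub : B.filter (· ≤ k) ⊆ (B.filter (· ≤ M)) ∪ Finset.Icc (M+1) k := by
      intro x hx
      rw [Finset.mem_filter] at hx
      rw [Finset.mem_union, Finset.mem_filter, Finset.mem_Icc]
      rcases le_or_gt x M with h | h
      · exact Or.inl ⟨hx.1, h⟩
      · exact Or.inr ⟨by omega, hx.2⟩
    calc scnt B k ≤ _ := Finset.card_le_card hsub
      _ ≤ (B.filter (· ≤ M)).card + (Finset.Icc (M+1) k).card := Finset.card_union_le _ _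
      _ ≤ 2 + (k - M) := by rw [Nat.card_Icc]; omega
  have relts : ∀ x ∈ S, 2 ≤ x ∧ x ≤ M + r - 2 := by
    intro x hx
    rw [hS, Finset.mem_union, Finset.mem_insert, Finset.mem_singleton, Finset.mem_Icc] at hx
    omega
  have h2S : (2 : ℕ) ∈ S := by
    rw [hS, Finset.mem_union, Finset.mem_insert]; exact Or.inl (Or.inl rfl)
  have h3S : (3 : ℕ) ∈ S := by
    rw [hS, Finset.mem_union, Finset.mem_insert, Finset.mem_singleton]
    exact Or.inl (Or.inr rfl)
  have rhs2 : 2 ≤ k → 1 ≤ scnt S k := by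
    intro hk; unfold scnt
    rw [Nat.succ_le_iff, Finset.card_pos]
    exact ⟨2, Finset.mem_filter.2 ⟨h2S, hk⟩⟩
  have rhs3 : 3 ≤ k → 2 ≤ scnt S k := by
    intro hk
    have hss : ({2,3} : Finset ℕ) ⊆ S.filter (· ≤ k) := by
      intro x hx
      simp only [Finset.mem_insert, Finset.mem_singleton] at hx
      rcases hx with rfl | rfl
      · exact Finset.mem_filter.2 ⟨h2S, by omega⟩
      · exact Finset.mem_filter.2 ⟨h3S, hk⟩
    calc 2 = ({2,3} : Finset ℕ).card := (Finset.card_pair (by omega)).symm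
      _ ≤ _ := Finset.card_le_card hss
  have rhstop : M + r - 2 ≤ k → scnt S k = r := by
    intro hk; unfold scnt
    rw [Finset.filter_true_of_mem (fun x hx => le_trans (relts x hx).2 hk), hScard]
  have rhsmid : M + 1 ≤ k → k ≤ M + r - 2 → 2 + (k - M) ≤ scnt S k := by
    intro hk1 hk2
    have hd2 : Disjoint ({2,3} : Finset ℕ) (Finset.Icc (M+1) k) := by
      rw [Finset.disjoint_left]; intro x hx hx'
      rw [Finset.mem_Icc] at hx'
      simp only [Finset.mem_insert, Finset.mem_singleton] at hx
      omega
    have hsub2 : ({2,3} ∪ Finset.Icc (M+1) k : Finset ℕ) ⊆ S.filter (· ≤ k) := by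
      intro x hx
      rw [Finset.mem_union, Finset.mem_insert, Finset.mem_singleton, Finset.mem_Icc] at hx
      refine Finset.mem_filter.2 ⟨?_, by omega⟩
      rw [hS, Finset.mem_union, Finset.mem_insert, Finset.mem_singleton, Finset.mem_Icc]
      omega
    calc 2 + (k - M) = ({2,3} ∪ Finset.Icc (M+1) k : Finset ℕ).card := by
          rw [Finset.card_union_of_disjoint hd2, Finset.card_pair (by omega), Nat.card_Icc]
          omega
      _ ≤ scnt S k := Finset.card_le_card hsub2
  rcases le_or_gt k 1 with hk | hk
  · rw [lhs0 hk]; omega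
  rcases le_or_gt k 2 with hk2 | hk2
  · have hke : k = 2 := by omega
    subst hke
    have := rhs2 (le_refl 2); omega
  rcases le_or_gt k M with hkM | hkM
  · have hmono := scnt_mono B hkM
    have := rhs3 (by omega); omega
  rcases le_or_gt k (M + r - 2) with hkT | hkT
  · have := lhsk (by omega); have := rhsmid (by omega) hkT; omega
  · have := rhstop (by omega); omega

lemma domle_pair {r M a b : ℕ} {D : Finset ℕ} (hr : 3 ≤ r) (hM : 3 ≤ M)
    (h1a : 1 ≤ a) (hab : a < b) (hb3 : b ≤ 3)
    (hD : D ⊆ Finset.Icc 4 M) (hDc : D.card = r - 2) :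
    DomLE ({a,b} ∪ D) ({2,3} ∪ Finset.Icc (M+1) (M+r-2)) := by
  have hDmem : ∀ x ∈ D, 4 ≤ x ∧ x ≤ M := by
    intro x hx; have := hD hx; rw [Finset.mem_Icc] at this; exact this
  have hdT : Disjoint ({a,b} : Finset ℕ) D := by
    rw [Finset.disjoint_left]; intro x hx hx'
    have := hDmem x hx'
    simp only [Finset.mem_insert, Finset.mem_singleton] at hx
    omega
  have hTcard : ({a,b} ∪ D : Finset ℕ).card = r := by
    rw [Finset.card_union_of_disjoint hdT, Finset.card_pair (by omega), hDc]
    omega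
  have hdS : Disjoint ({2,3} : Finset ℕ) (Finset.Icc (M+1) (M+r-2)) := by
    rw [Finset.disjoint_left]; intro x hx hx'
    rw [Finset.mem_Icc] at hx'
    simp only [Finset.mem_insert, Finset.mem_singleton] at hx
    omega
  have hScard : ({2,3} ∪ Finset.Icc (M+1) (M+r-2) : Finset ℕ).card = r := by
    rw [Finset.card_union_of_disjoint hdS, Nat.card_Icc, Finset.card_pair (by omega)]
    omega
  apply domle_of_scnt
  · rw [hScard, hTcard]
  intro k
  set S := ({2,3} ∪ Finset.Icc (M+1) (M+r-2) : Finset ℕ) with hS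
  set T := ({a,b} ∪ D : Finset ℕ) with hT
  have smem : ∀ x ∈ S, (x = 2 ∨ x = 3 ∨ (M+1 ≤ x ∧ x ≤ M+r-2)) := by
    intro x hx
    rw [hS, Finset.mem_union, Finset.mem_insert, Finset.mem_singleton, Finset.mem_Icc] at hx
    tauto
  have lhs0 : k ≤ 1 → scnt S k = 0 := by
    intro hk; unfold scnt
    rw [Finset.card_eq_zero, Finset.filter_eq_empty_iff]
    intro x hx hxk
    have := smem x hx; omega
  have lhs2 : scnt S 2 ≤ 1 := by
    have hss : S.filter (· ≤ 2) ⊆ {2} := by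
      intro x hx; rw [Finset.mem_filter] at hx
      have := smem x hx.1
      have := hx.2
      simp only [Finset.mem_singleton]
      omega
    calc scnt S 2 ≤ ({2} : Finset ℕ).card := Finset.card_le_card hss
      _ = 1 := rfl
  have lhsM : k ≤ M → scnt S k ≤ 2 := by
    intro hk
    have hss : S.filter (· ≤ k) ⊆ {2,3} := by
      intro x hx; rw [Finset.mem_filter] at hx
      have := smem x hx.1
      have := hx.2
      simp only [Finset.mem_insert, Finset.mem_singleton]
      omega
    calc scnt S k ≤ ({2,3} : Finset ℕ).card := Finset.card_le_card hss
      _ = 2 := Finset.card_pair (by omega)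
  have lhsr : scnt S k ≤ r := hScard ▸ scnt_le_card S k
  have haT : a ∈ T := by rw [hT, Finset.mem_union, Finset.mem_insert]; exact Or.inl (Or.inl rfl)
  have hbT : b ∈ T := by
    rw [hT, Finset.mem_union, Finset.mem_insert, Finset.mem_singleton]
    exact Or.inl (Or.inr rfl)
  have rhs2 : 2 ≤ k → 1 ≤ scnt T k := by
    intro hk; unfold scnt
    rw [Nat.succ_le_iff, Finset.card_pos]
    exact ⟨a, Finset.mem_filter.2 ⟨haT, by omega⟩⟩
  have rhs3 : 3 ≤ k → 2 ≤ scnt T k := by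
    intro hk
    have hss : ({a,b} : Finset ℕ) ⊆ T.filter (· ≤ k) := by
      intro x hx
      simp only [Finset.mem_insert, Finset.mem_singleton] at hx
      rcases hx with rfl | rfl
      · exact Finset.mem_filter.2 ⟨haT, by omega⟩
      · exact Finset.mem_filter.2 ⟨hbT, by omega⟩
    calc 2 = ({a,b} : Finset ℕ).card := (Finset.card_pair (by omega)).symm
      _ ≤ _ := Finset.card_le_card hss
  have rhstop : M ≤ k → scnt T k = r := by
    intro hk; unfold scnt
    rw [Finset.filter_true_of_mem, hTcard]
    intro x hx
    rw [hT, Finset.mem_union, Finset.mem_insert, Finset.mem_singleton] at hx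
    rcases hx with (rfl | rfl) | hx
    · omega
    · omega
    · have := hDmem x hx; omega
  rcases le_or_gt k 1 with hk | hk
  · rw [lhs0 hk]; omega
  rcases le_or_gt k 2 with hk2 | hk2
  · have hke : k = 2 := by omega
    subst hke
    have := rhs2 (le_refl 2); omega
  rcases le_or_gt k M with hkM | hkM
  · have := lhsM hkM
    have := rhs3 (by omega); omega
  · have := rhstop (by omega); omega
lemma potgen_empty_false {n r : ℕ} {𝒜 : Finset (Finset ℕ)} (hr : 1 ≤ r) (hn : 2*r ≤ n)
    (hint : IntersectingFam 𝒜) (h : PotGen n r 𝒜 ∅) : False := by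
  have h1 : Finset.Icc 1 r ∈ 𝒜 := by
    refine h.2 _ (mem_chooseFam.2 ⟨Finset.Icc_subset_Icc (le_refl 1) (by omega), ?_⟩)
      (Finset.empty_subset _)
    rw [Nat.card_Icc]; omega
  have h2 : Finset.Icc (r+1) (2*r) ∈ 𝒜 := by
    refine h.2 _ (mem_chooseFam.2 ⟨Finset.Icc_subset_Icc (by omega) (by omega), ?_⟩)
      (Finset.empty_subset _)
    rw [Nat.card_Icc]; omega
  obtain ⟨x, hx⟩ := hint _ h1 _ h2
  rw [Finset.mem_inter, Finset.mem_Icc, Finset.mem_Icc] at hx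
  omega

lemma potgen_singleton_false {n r x : ℕ} {𝒜 : Finset (Finset ℕ)} (hr : 1 ≤ r) (hn : 2*r ≤ n)
    (hint : IntersectingFam 𝒜) (hrank : rankFam n r 𝒜 = 2)
    (hx1 : 1 ≤ x) (hxn : x ≤ n) (h : PotGen n r 𝒜 {x}) : False := by
  classical
  have hc : ({x} : Finset ℕ) ∈ canonGen n r 𝒜 := by
    rw [canonGen, Finset.mem_filter, Finset.mem_powerset]
    refine ⟨Finset.singleton_subset_iff.2 (Finset.mem_Icc.2 ⟨hx1, hxn⟩), h, ?_⟩
    intro G' hG' hpG'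
    rcases Finset.subset_singleton_iff.1 hG' with rfl | rfl
    · exact (potgen_empty_false hr hn hint hpG').elim
    · rfl
  have hle : rankFam n r 𝒜 ≤ 1 :=
    Nat.sInf_le ⟨{x}, hc, Finset.card_singleton x⟩
  omega

lemma one_mem_of_domle_s14 {n : ℕ} {A B' : Finset ℕ} (hA : 1 ∈ A) (hB' : B' ⊆ Finset.Icc 1 n)
    (h : DomLE B' A) : 1 ∈ B' := by
  have h1 : 1 ≤ scnt A 1 := by
    unfold scnt
    rw [Nat.succ_le_iff, Finset.card_pos]
    exact ⟨1, Finset.mem_filter.2 ⟨hA, le_refl 1⟩⟩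
  have h2 := scnt_of_domle h 1
  have h3 : (B'.filter (· ≤ 1)).Nonempty := by
    rw [← Finset.card_pos]
    unfold scnt at h1 h2
    omega
  obtain ⟨x, hx⟩ := h3
  rw [Finset.mem_filter] at hx
  have hm := hB' hx.1
  rw [Finset.mem_Icc] at hm
  have : x = 1 := by omega
  exact this ▸ hx.1

lemma star_lcif (n r : ℕ) : IsLCIF n r (starFam n r) := by
  refine ⟨Finset.filter_subset _ _, ?_, ?_⟩
  · intro A hA B hB
    rw [starFam, Finset.mem_filter] at hA hB
    exact ⟨1, Finset.mem_inter.2 ⟨hA.2, hB.2⟩⟩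
  · intro A hA B' hB' hdom
    rw [starFam, Finset.mem_filter] at hA ⊢
    exact ⟨hB', one_mem_of_domle_s14 hA.2 (mem_chooseFam.1 hB').1 hdom⟩

lemma exists_nostar {n r : ℕ} {𝒜 : Finset (Finset ℕ)} (hr : 1 ≤ r) (hn : 2*r ≤ n)
    (hml : IsMLCIF n r 𝒜) (hrank : rankFam n r 𝒜 = 2) : ∃ B ∈ 𝒜, 1 ∉ B := by
  by_contra hcon
  push_neg at hcon
  have hsub : 𝒜 ⊆ starFam n r := by
    intro A hA
    rw [starFam, Finset.mem_filter]
    exact ⟨hml.1.1 hA, hcon A hA⟩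
  have heq : starFam n r = 𝒜 := hml.2 _ (star_lcif n r) hsub
  have hpot1 : PotGen n r 𝒜 {1} := by
    refine ⟨Finset.singleton_subset_iff.2 (Finset.mem_Icc.2 ⟨le_refl 1, by omega⟩), ?_⟩
    intro A hA h1
    rw [← heq, starFam, Finset.mem_filter]
    exact ⟨hA, Finset.singleton_subset_iff.1 h1⟩
  exact potgen_singleton_false hr hn hml.1.2.1 hrank (le_refl 1) (by omega) hpot1

lemma Icc2_mem {n r : ℕ} {𝒜 : Finset (Finset ℕ)} (hr : 1 ≤ r) (hn : r+1 ≤ n)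
    (hml : IsLCIF n r 𝒜) {B : Finset ℕ} (hB : B ∈ 𝒜) (h1B : 1 ∉ B) :
    Finset.Icc 2 (r+1) ∈ 𝒜 := by
  obtain ⟨hBs, hBc⟩ := mem_chooseFam.1 (hml.1 hB)
  refine hml.2.2 B hB _ ?_ (domle_Icc2 hBs h1B hBc)
  refine mem_chooseFam.2 ⟨Finset.Icc_subset_Icc (by omega) (by omega), ?_⟩
  rw [Nat.card_Icc]; omega
lemma lemA {n r : ℕ} {𝒜 : Finset (Finset ℕ)} (hr : 3 ≤ r) (hn : 3*r ≤ n)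
    (hml : IsMLCIF n r 𝒜) (hrank : rankFam n r 𝒜 = 2)
    (hgen : ∀ G ∈ canonGen n r 𝒜, G.card = 2 → 1 ∈ G)
    {B : Finset ℕ} (hB : B ∈ 𝒜) (h1B : 1 ∉ B) :
    3 ≤ (B.filter (· ≤ 2*r+2)).card := by
  classical
  by_contra hcon
  push_neg at hcon
  set M := 2*r+2 with hMdef
  obtain ⟨⟨hsub, hint, hlc⟩, hmax⟩ := hml
  obtain ⟨hBs, hBc⟩ := mem_chooseFam.1 (hsub hB)
  -- the pushed-down set S0
  set S0 := ({2,3} ∪ Finset.Icc (M+1) (M+r-2) : Finset ℕ) with hS0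
  have hS0mem : S0 ∈ chooseFam n r := by
    refine mem_chooseFam.2 ⟨?_, ?_⟩
    · intro x hx
      rw [hS0, Finset.mem_union, Finset.mem_insert, Finset.mem_singleton, Finset.mem_Icc] at hx
      rw [Finset.mem_Icc]
      omega
    · have hdisj : Disjoint ({2,3} : Finset ℕ) (Finset.Icc (M+1) (M+r-2)) := by
        rw [Finset.disjoint_left]; intro x hx hx'
        rw [Finset.mem_Icc] at hx'
        simp only [Finset.mem_insert, Finset.mem_singleton] at hx
        omega
      rw [hS0, Finset.card_union_of_disjoint hdisj, Nat.card_Icc,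
        Finset.card_pair (by omega)]
      omega
  have hS0A : S0 ∈ 𝒜 :=
    hlc B hB _ hS0mem (domle_Bhat hr (by omega) hBs h1B hBc (by omega))
  -- every member of 𝒜 meets every pair {a,b} ⊆ [1,3]
  have hpair : ∀ C ∈ 𝒜, ∀ a b : ℕ, 1 ≤ a → a < b → b ≤ 3 → (C ∩ {a,b}).Nonempty := by
    intro C hC a b h1a hab hb3
    by_contra hne
    rw [Finset.not_nonempty_iff_eq_empty] at hne
    obtain ⟨hCs, hCc⟩ := mem_chooseFam.1 (hsub hC)
    have hcard4M : r - 2 ≤ (Finset.Icc 4 M \ C).card := by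
      have h1 := Finset.le_card_sdiff C (Finset.Icc 4 M)
      rw [Nat.card_Icc] at h1
      omega
    obtain ⟨D, hD, hDc⟩ := Finset.exists_subset_card_eq hcard4M
    have hDIcc : D ⊆ Finset.Icc 4 M := hD.trans (Finset.sdiff_subset)
    have hPD : ({a,b} ∪ D : Finset ℕ) ∈ chooseFam n r := by
      refine mem_chooseFam.2 ⟨?_, ?_⟩
      · intro x hx
        rw [Finset.mem_union, Finset.mem_insert, Finset.mem_singleton] at hx
        rw [Finset.mem_Icc]
        rcases hx with (rfl | rfl) | hx
        · omega
        · omega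
        · have := Finset.mem_Icc.1 (hDIcc hx); omega
      · have hdT : Disjoint ({a,b} : Finset ℕ) D := by
          rw [Finset.disjoint_left]; intro x hx hx'
          have := Finset.mem_Icc.1 (hDIcc hx')
          simp only [Finset.mem_insert, Finset.mem_singleton] at hx
          omega
        rw [Finset.card_union_of_disjoint hdT, Finset.card_pair (by omega), hDc]
        omega
    have hPDA : ({a,b} ∪ D : Finset ℕ) ∈ 𝒜 :=
      hlc S0 hS0A _ hPD (domle_pair hr (by omega) h1a hab hb3 hDIcc hDc)
    obtain ⟨x, hx⟩ := hint C hC _ hPDA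
    rw [Finset.mem_inter, Finset.mem_union] at hx
    rcases hx.2 with hxP | hxD
    · have : x ∈ C ∩ {a,b} := Finset.mem_inter.2 ⟨hx.1, hxP⟩
      rw [hne] at this
      exact absurd this (Finset.notMem_empty x)
    · have : x ∉ C := (Finset.mem_sdiff.1 (hD hxD)).2
      exact this hx.1
  -- the family 𝒞
  set 𝒞 := (chooseFam n r).filter (fun A => 2 ≤ (A.filter (· ≤ 3)).card) with h𝒞
  have hextract : ∀ A ∈ 𝒞, ∃ a b : ℕ, 1 ≤ a ∧ a < b ∧ b ≤ 3 ∧ a ∈ A ∧ b ∈ A := by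
    intro A hA
    rw [h𝒞, Finset.mem_filter] at hA
    obtain ⟨x, hx, y, hy, hxy⟩ := Finset.one_lt_card.1 (by omega : 1 < (A.filter (· ≤ 3)).card)
    rw [Finset.mem_filter] at hx hy
    have hAx := Finset.mem_Icc.1 ((mem_chooseFam.1 hA.1).1 hx.1)
    have hAy := Finset.mem_Icc.1 ((mem_chooseFam.1 hA.1).1 hy.1)
    rcases lt_or_gt_of_ne hxy with h | h
    · exact ⟨x, y, by omega, h, hy.2, hx.1, hy.1⟩
    · exact ⟨y, x, by omega, h, hx.2, hy.1, hx.1⟩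
  have hCint : ∀ A ∈ 𝒞, ∀ C ∈ 𝒜, (C ∩ A).Nonempty := by
    intro A hA C hC
    obtain ⟨a, b, h1a, hab, hb3, haA, hbA⟩ := hextract A hA
    obtain ⟨x, hx⟩ := hpair C hC a b h1a hab hb3
    rw [Finset.mem_inter, Finset.mem_insert, Finset.mem_singleton] at hx
    refine ⟨x, Finset.mem_inter.2 ⟨hx.1, ?_⟩⟩
    rcases hx.2 with rfl | rfl
    · exact haA
    · exact hbA
  have hunion : IsLCIF n r (𝒜 ∪ 𝒞) := by
    refine ⟨Finset.union_subset hsub (h𝒞 ▸ Finset.filter_subset _ _), ?_, ?_⟩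
    · intro A hA B' hB'
      rw [Finset.mem_union] at hA hB'
      rcases hA with hA | hA <;> rcases hB' with hB' | hB'
      · exact hint A hA B' hB'
      · obtain ⟨x, hx⟩ := hCint B' hB' A hA
        exact ⟨x, by rw [Finset.mem_inter] at hx ⊢; exact ⟨hx.1, hx.2⟩⟩
      · obtain ⟨x, hx⟩ := hCint A hA B' hB'
        rw [Finset.mem_inter] at hx
        exact ⟨x, Finset.mem_inter.2 ⟨hx.2, hx.1⟩⟩
      · -- both in 𝒞
        rw [h𝒞, Finset.mem_filter] at hA hB'
        have hsubA : A.filter (· ≤ 3) ⊆ Finset.Icc 1 3 := by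
          intro x hx; rw [Finset.mem_filter] at hx
          have := Finset.mem_Icc.1 ((mem_chooseFam.1 hA.1).1 hx.1)
          rw [Finset.mem_Icc]; omega
        have hsubB : B'.filter (· ≤ 3) ⊆ Finset.Icc 1 3 := by
          intro x hx; rw [Finset.mem_filter] at hx
          have := Finset.mem_Icc.1 ((mem_chooseFam.1 hB'.1).1 hx.1)
          rw [Finset.mem_Icc]; omega
        have hun : (A.filter (· ≤ 3) ∪ B'.filter (· ≤ 3)).card ≤ 3 := by
          calc _ ≤ (Finset.Icc 1 3).card :=
                Finset.card_le_card (Finset.union_subset hsubA hsubB)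
            _ = 3 := by rw [Nat.card_Icc]
        have hii := Finset.card_union_add_card_inter (A.filter (· ≤ 3)) (B'.filter (· ≤ 3))
        have hpos : 0 < ((A.filter (· ≤ 3)) ∩ (B'.filter (· ≤ 3))).card := by omega
        obtain ⟨x, hx⟩ := Finset.card_pos.1 hpos
        rw [Finset.mem_inter, Finset.mem_filter, Finset.mem_filter] at hx
        exact ⟨x, Finset.mem_inter.2 ⟨hx.1.1, hx.2.1⟩⟩
    · intro A hA B' hB' hdom
      rw [Finset.mem_union] at hA ⊢
      rcases hA with hA | hA
      · exact Or.inl (hlc A hA B' hB' hdom)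
      · refine Or.inr ?_
        rw [h𝒞, Finset.mem_filter] at hA ⊢
        refine ⟨hB', ?_⟩
        have := scnt_of_domle hdom 3
        unfold scnt at this
        omega
  have hCsub : 𝒞 ⊆ 𝒜 := by
    have heq := hmax _ hunion Finset.subset_union_left
    intro x hx
    rw [← heq]
    exact Finset.mem_union_right _ hx
  -- {2,3} is a potential generator
  have hpot : PotGen n r 𝒜 {2,3} := by
    refine ⟨?_, ?_⟩
    · intro x hx
      simp only [Finset.mem_insert, Finset.mem_singleton] at hx
      rw [Finset.mem_Icc]
      omega
    · intro A hA h23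
      refine hCsub ?_
      rw [h𝒞, Finset.mem_filter]
      refine ⟨hA, ?_⟩
      have h2f : (2 : ℕ) ∈ A.filter (· ≤ 3) :=
        Finset.mem_filter.2 ⟨h23 (by simp), by omega⟩
      have h3f : (3 : ℕ) ∈ A.filter (· ≤ 3) :=
        Finset.mem_filter.2 ⟨h23 (by simp), by omega⟩
      have : ({2,3} : Finset ℕ) ⊆ A.filter (· ≤ 3) := by
        intro x hx
        simp only [Finset.mem_insert, Finset.mem_singleton] at hx
        rcases hx with rfl | rfl
        · exact h2f
        · exact h3f
      calc 2 = ({2,3} : Finset ℕ).card := (Finset.card_pair (by omega)).symm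
        _ ≤ _ := Finset.card_le_card this
  -- {2,3} ∈ canonGen
  have hcg : ({2,3} : Finset ℕ) ∈ canonGen n r 𝒜 := by
    rw [canonGen, Finset.mem_filter, Finset.mem_powerset]
    refine ⟨hpot.1, hpot, ?_⟩
    intro G' hG' hpG'
    by_contra hne
    have hGc : G'.card < 2 := by
      have hle : G'.card ≤ 2 := by
        calc G'.card ≤ ({2,3} : Finset ℕ).card := Finset.card_le_card hG'
          _ = 2 := Finset.card_pair (by omega)
      rcases lt_or_eq_of_le hle with h | h
      · exact h
      · exact absurd (Finset.eq_of_subset_of_card_le hG'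
          (by rw [Finset.card_pair (by omega), h])) hne
    interval_cases hGi : G'.card
    · rw [Finset.card_eq_zero] at hGi
      subst hGi
      exact potgen_empty_false (by omega) (by omega) hint hpG'
    · rw [Finset.card_eq_one] at hGi
      obtain ⟨x, rfl⟩ := hGi
      have hx23 : x ∈ ({2,3} : Finset ℕ) := hG' (Finset.mem_singleton_self x)
      simp only [Finset.mem_insert, Finset.mem_singleton] at hx23
      exact potgen_singleton_false (by omega) (by omega) hint hrank
        (by omega) (by omega) hpG'
  have h1m := hgen _ hcg (Finset.card_pair (by omega))
  simp only [Finset.mem_insert, Finset.mem_singleton] at h1m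
  omega
lemma hit_union_disjoint (X : Finset ℕ) {s t : Finset (Finset ℕ)} (h : Disjoint s t) :
    hit X (s ∪ t) = hit X s + hit X t := by
  unfold hit
  rw [Finset.filter_union, Finset.card_union_of_disjoint (Finset.disjoint_filter_filter h)]

lemma card_small_bound {n r M : ℕ} (hr : 3 ≤ r) {𝒯 : Finset (Finset ℕ)}
    (h : ∀ B ∈ 𝒯, B ⊆ Finset.Icc 1 n ∧ B.card = r ∧ 1 ∉ B ∧ 3 ≤ (B.filter (· ≤ M)).card) :
    𝒯.card ≤ (M-1).choose 3 * n.choose (r-3) := by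
  classical
  set TB : Finset ℕ → Finset ℕ :=
    fun B => (((B.filter (· ≤ M)).sort (· ≤ ·)).take 3).toFinset with hTB
  have hTBsub : ∀ B, TB B ⊆ B.filter (· ≤ M) := by
    intro B x hx
    rw [hTB, List.mem_toFinset] at hx
    exact (Finset.mem_sort _).1 (List.mem_of_mem_take hx)
  have hTBcard : ∀ B ∈ 𝒯, (TB B).card = 3 := by
    intro B hB
    rw [hTB, List.toFinset_card_of_nodup
      ((List.take_sublist _ _).nodup ((B.filter (· ≤ M)).sort_nodup _)),
      List.length_take, Finset.length_sort]
    have := (h B hB).2.2.2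
    omega
  have key := Finset.card_le_card_of_injOn
    (f := fun B => ((TB B, B \ TB B) : Finset ℕ × Finset ℕ))
    (s := 𝒯)
    (t := ((Finset.Icc 2 M).powersetCard 3) ×ˢ ((Finset.Icc 1 n).powersetCard (r-3)))
    ?_ ?_
  · rw [Finset.card_product, Finset.card_powersetCard, Finset.card_powersetCard,
      Nat.card_Icc, Nat.card_Icc] at key
    have : M + 1 - 2 = M - 1 := by omega
    rw [this] at key
    simpa using key
  · intro B hB
    obtain ⟨hBs, hBc, h1B, h3B⟩ := h B hB
    rw [Finset.mem_coe, Finset.mem_product, Finset.mem_powersetCard, Finset.mem_powersetCard]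
    refine ⟨⟨?_, hTBcard B hB⟩, ?_, ?_⟩
    · intro x hx
      have hx' := hTBsub B hx
      rw [Finset.mem_filter] at hx'
      have := Finset.mem_Icc.1 (hBs hx'.1)
      have hne : x ≠ 1 := fun hh => h1B (hh ▸ hx'.1)
      rw [Finset.mem_Icc]
      omega
    · exact (Finset.sdiff_subset).trans hBs
    · rw [Finset.card_sdiff_of_subset ((hTBsub B).trans (Finset.filter_subset _ _)), hBc,
        hTBcard B hB]
  · intro B₁ h₁ B₂ h₂ heq
    rw [Prod.mk.injEq] at heq
    have hr₁ : B₁ = TB B₁ ∪ (B₁ \ TB B₁) :=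
      (Finset.union_sdiff_of_subset ((hTBsub B₁).trans (Finset.filter_subset _ _))).symm
    have hr₂ : B₂ = TB B₂ ∪ (B₂ \ TB B₂) :=
      (Finset.union_sdiff_of_subset ((hTBsub B₂).trans (Finset.filter_subset _ _))).symm
    conv_lhs => rw [hr₁]
    conv_rhs => rw [hr₂]
    rw [heq.2, heq.1]

lemma lower_bound {n r x₀ : ℕ} {𝒜 : Finset (Finset ℕ)} {X : Finset ℕ} (hr : 3 ≤ r)
    (hx : r+2 ≤ x₀) (hxn : x₀ ≤ n) (hIcc : Finset.Icc 2 (r+1) ∈ 𝒜)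
    (hint : IntersectingFam 𝒜) (hx₀X : x₀ ∈ X) :
    (n - r - 2).choose (r-2) ≤ hit X ((starFam n r) \ 𝒜) := by
  classical
  set base := (Finset.Icc (r+2) n).erase x₀ with hbase
  have hbc : base.card = n - r - 2 := by
    rw [hbase, Finset.card_erase_of_mem (Finset.mem_Icc.2 ⟨hx, hxn⟩), Nat.card_Icc]
    omega
  have hbmem : ∀ x ∈ base, r + 2 ≤ x ∧ x ≤ n ∧ x ≠ x₀ := by
    intro x hxx
    rw [hbase, Finset.mem_erase, Finset.mem_Icc] at hxx
    exact ⟨hxx.2.1, hxx.2.2, hxx.1⟩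
  have key := Finset.card_le_card_of_injOn
    (f := fun S => insert 1 (insert x₀ S))
    (s := base.powersetCard (r-2))
    (t := ((starFam n r) \ 𝒜).filter (fun A => (A ∩ X).Nonempty))
    ?_ ?_
  · rw [Finset.card_powersetCard, hbc] at key
    exact key
  · intro S hS
    rw [Finset.mem_coe, Finset.mem_powersetCard] at hS
    obtain ⟨hSb, hSc⟩ := hS
    have hx₀S : x₀ ∉ S := fun hh => (hbmem _ (hSb hh)).2.2 rfl
    have h1S : (1 : ℕ) ∉ insert x₀ S := by
      rw [Finset.mem_insert]
      rintro (hh | hh)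
      · omega
      · have := (hbmem _ (hSb hh)).1; omega
    have hAc : (insert 1 (insert x₀ S)).card = r := by
      rw [Finset.card_insert_of_notMem h1S, Finset.card_insert_of_notMem hx₀S, hSc]
      omega
    have hAsub : insert 1 (insert x₀ S) ⊆ Finset.Icc 1 n := by
      intro x hxx
      rw [Finset.mem_insert, Finset.mem_insert] at hxx
      rw [Finset.mem_Icc]
      rcases hxx with rfl | rfl | hxx
      · omega
      · omega
      · have := hbmem _ (hSb hxx); omega
    have hdisjIcc : (insert 1 (insert x₀ S)) ∩ Finset.Icc 2 (r+1) = ∅ := by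
      rw [Finset.eq_empty_iff_forall_notMem]
      intro x hxx
      rw [Finset.mem_inter, Finset.mem_insert, Finset.mem_insert, Finset.mem_Icc] at hxx
      rcases hxx.1 with rfl | rfl | hxx' 
      · omega
      · omega
      · have := hbmem _ (hSb hxx'); omega
    have hnotA : insert 1 (insert x₀ S) ∉ 𝒜 := by
      intro hh
      obtain ⟨y, hy⟩ := hint _ hh _ hIcc
      rw [hdisjIcc] at hy
      exact Finset.notMem_empty y hy
    rw [Finset.mem_coe, Finset.mem_filter, Finset.mem_sdiff, starFam, Finset.mem_filter]
    refine ⟨⟨⟨mem_chooseFam.2 ⟨hAsub, hAc⟩, Finset.mem_insert_self 1 _⟩, hnotA⟩, ?_⟩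
    exact ⟨x₀, Finset.mem_inter.2
      ⟨Finset.mem_insert.2 (Or.inr (Finset.mem_insert_self x₀ S)), hx₀X⟩⟩
  · intro S₁ h₁ S₂ h₂ heq
    rw [Finset.mem_coe, Finset.mem_powersetCard] at h₁ h₂
    have hfree : ∀ S : Finset ℕ, S ⊆ base →
        ((insert 1 (insert x₀ S)).erase 1).erase x₀ = S := by
      intro S hSb
      have hx₀S : x₀ ∉ S := fun hh => (hbmem _ (hSb hh)).2.2 rfl
      have h1S : (1 : ℕ) ∉ insert x₀ S := by
        rw [Finset.mem_insert]
        rintro (hh | hh)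
        · omega
        · have := (hbmem _ (hSb hh)).1; omega
      rw [Finset.erase_insert h1S, Finset.erase_insert hx₀S]
    calc S₁ = ((insert 1 (insert x₀ S₁)).erase 1).erase x₀ := (hfree S₁ h₁.1).symm
      _ = ((insert 1 (insert x₀ S₂)).erase 1).erase x₀ := by rw [show insert 1 (insert x₀ S₁) = insert 1 (insert x₀ S₂) from heq]
      _ = S₂ := hfree S₂ h₂.1

lemma numeric {r n : ℕ} (hr : 3 ≤ r)
    (hn : (r-2).factorial * ((2*r+1).choose 3) * 2^r + 8*r + 8 ≤ n) :
    (2*r+1).choose 3 * n.choose (r-3) < (n - r - 2).choose (r-2) := by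
  set c := (2*r+1).choose 3 with hc
  set t := r - 2 with ht
  set q := n - 2*r + 1 with hq
  have hcpos : 0 < c := Nat.choose_pos (by omega)
  have hfpos : 0 < t.factorial := Nat.factorial_pos t
  have h2rpos : 0 < 2^r := Nat.pow_pos (by omega)
  have hnbig : 8*r + 8 ≤ n := by
    have : 0 < (r-2).factorial * ((2*r+1).choose 3) * 2^r + 8*r + 8 := by positivity
    omega
  have hqn : (n - r - 2) + 1 - t = q := by omega
  have h1 : q ^ t ≤ t.factorial * ((n - r - 2).choose t) := by
    rw [← Nat.descFactorial_eq_factorial_mul_choose, ← hqn]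
    exact Nat.pow_sub_le_descFactorial _ _
  have h2 : n.choose (r-3) ≤ n ^ (r-3) := Nat.choose_le_pow _ _
  have hn2q : n ≤ 2 * q := by omega
  have h3 : n ^ (r-3) ≤ 2^(r-3) * q^(r-3) := by
    calc n^(r-3) ≤ (2*q)^(r-3) := Nat.pow_le_pow_left hn2q _
      _ = 2^(r-3)*q^(r-3) := mul_pow 2 q (r-3)
  have hqpos : 0 < q := by omega
  have hbig : t.factorial * c * 2^(r-3) < q := by
    have hp : 2^(r-3) ≤ 2^r := Nat.pow_le_pow_right (by omega) (by omega)
    have h4 : t.factorial * c * 2^(r-3) ≤ t.factorial * c * 2^r :=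
      Nat.mul_le_mul_left _ hp
    have h5 : t.factorial * c * 2^r + 8*r + 8 ≤ n := by
      rw [ht, hc] at *
      exact hn
    omega
  have hq_t : q ^ t = q^(r-3) * q := by
    rw [← pow_succ]
    congr 1
    omega
  have key : t.factorial * (c * n.choose (r-3)) < t.factorial * ((n-r-2).choose t) := by
    calc t.factorial * (c * n.choose (r-3))
        = t.factorial * c * n.choose (r-3) := by ring
      _ ≤ t.factorial * c * n^(r-3) := Nat.mul_le_mul_left _ h2
      _ ≤ t.factorial * c * (2^(r-3) * q^(r-3)) := Nat.mul_le_mul_left _ h3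
      _ = (t.factorial * c * 2^(r-3)) * q^(r-3) := by ring
      _ < q * q^(r-3) := by
          apply Nat.mul_lt_mul_of_lt_of_le hbig (le_refl _)
          exact Nat.pow_pos hqpos
      _ = q ^ t := by rw [hq_t]; ring
      _ ≤ t.factorial * ((n-r-2).choose t) := h1
  exact Nat.lt_of_mul_lt_mul_left key
/-- For `r ≥ 3` and `n` sufficiently large: for every nonempty
`X ⊆ [2,n]` with `X ⊄ [2, r+1]`, and every MLCIF `𝒜 ∈ ⋃_{j=2}^{r+1} I_j`,
we have `hit_X(𝒮) > hit_X(𝒜)`. -/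
theorem stmt14 :
    ∀ r : ℕ, 3 ≤ r → ∃ N : ℕ, ∀ n : ℕ, N ≤ n →
      ∀ X : Finset ℕ, X ⊆ Finset.Icc 2 n → X.Nonempty →
        ¬ X ⊆ Finset.Icc 2 (r + 1) →
        ∀ 𝒜 : Finset (Finset ℕ), (∃ j : ℕ, 2 ≤ j ∧ j ≤ r + 1 ∧ MemI n r j 𝒜) →
          hit X 𝒜 < hit X (starFam n r) := by
  intro r hr
  refine ⟨(r-2).factorial * ((2*r+1).choose 3) * 2^r + 8*r + 8, ?_⟩
  intro n hn X hXsub hXne hXnsub 𝒜 h𝒜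
  obtain ⟨j, hj2, hjr, hml, hrank, hfilter⟩ := h𝒜
  have hnbig : 8*r + 8 ≤ n := by
    have h1 : 0 < (r-2).factorial := Nat.factorial_pos _
    have h2 : 0 < (2*r+1).choose 3 := Nat.choose_pos (by omega)
    have h3 : 0 < 2^r := Nat.pow_pos (by omega)
    have := Nat.mul_pos (Nat.mul_pos h1 h2) h3
    omega
  obtain ⟨x₀, hx₀X, hx₀n⟩ := Finset.not_subset.1 hXnsub
  have hx₀m := Finset.mem_Icc.1 (hXsub hx₀X)
  have hx₀r : r + 2 ≤ x₀ := by
    have hnot : ¬(2 ≤ x₀ ∧ x₀ ≤ r+1) := fun h => hx₀n (Finset.mem_Icc.2 h)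
    omega
  have hgen : ∀ G ∈ canonGen n r 𝒜, G.card = 2 → 1 ∈ G := by
    intro G hG hGc
    have hGm : G ∈ (canonGen n r 𝒜).filter (fun G => G.card = 2) :=
      Finset.mem_filter.2 ⟨hG, hGc⟩
    rw [hfilter] at hGm
    obtain ⟨i, hi, hGi⟩ := Finset.mem_image.1 hGm
    rw [← hGi]
    exact Finset.mem_insert_self 1 _
  obtain ⟨B₀, hB₀, h1B₀⟩ := exists_nostar (by omega) (by omega) hml hrank
  have hIcc := Icc2_mem (by omega) (by omega) hml.1 hB₀ h1B₀
  set 𝒮 := starFam n r with h𝒮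
  have e1 : hit X 𝒜 = hit X (𝒜 \ 𝒮) + hit X (𝒜 ∩ 𝒮) := by
    conv_lhs => rw [← Finset.sdiff_union_inter 𝒜 𝒮]
    exact hit_union_disjoint X (Finset.disjoint_sdiff_inter 𝒜 𝒮)
  have e2 : hit X 𝒮 = hit X (𝒮 \ 𝒜) + hit X (𝒮 ∩ 𝒜) := by
    conv_lhs => rw [← Finset.sdiff_union_inter 𝒮 𝒜]
    exact hit_union_disjoint X (Finset.disjoint_sdiff_inter 𝒮 𝒜)
  have einter : hit X (𝒮 ∩ 𝒜) = hit X (𝒜 ∩ 𝒮) := by rw [Finset.inter_comm]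
  have hup : hit X (𝒜 \ 𝒮) ≤ (2*r+1).choose 3 * n.choose (r-3) := by
    have h1 : hit X (𝒜 \ 𝒮) ≤ (𝒜 \ 𝒮).card := Finset.card_filter_le _ _
    have h2 : (𝒜 \ 𝒮).card ≤ ((2*r+2)-1).choose 3 * n.choose (r-3) := by
      apply card_small_bound hr
      intro B hB
      rw [Finset.mem_sdiff] at hB
      have hcf := mem_chooseFam.1 (hml.1.1 hB.1)
      have h1B : 1 ∉ B := by
        intro hh
        exact hB.2 (by rw [h𝒮, starFam, Finset.mem_filter]; exact ⟨hml.1.1 hB.1, hh⟩)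
      exact ⟨hcf.1, hcf.2, h1B, lemA hr (by omega) hml hrank hgen hB.1 h1B⟩
    have h3 : (2*r+2) - 1 = 2*r+1 := by omega
    rw [h3] at h2
    omega
  have hlow : (n - r - 2).choose (r-2) ≤ hit X (𝒮 \ 𝒜) :=
    lower_bound hr hx₀r (by omega) hIcc hml.1.2.1 hx₀X
  have hnum := numeric hr hn
  omega
end

section
/- For every integer r ≥ 3 there exists N such that for all n ≥ N the following holds: for every nonempty X ⊆ [2,r+1] with X ≠ {2}, writing m = max X, and for every MLCIF 𝒜 ∈ ⋃_{j=2}^{r+1} I_j with 𝒜 ≠ AHM_m, we have hit_X(AHM_m) > hit_X(𝒜). -/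
open Finset

namespace S15

/-- number of elements of `A` that are `≤ t` -/
def cnt (A : Finset ℕ) (t : ℕ) : ℕ := (A.filter (· ≤ t)).card

lemma cnt_eq_length_sort (A : Finset ℕ) (t : ℕ) :
    cnt A t = ((A.sort (· ≤ ·)).filter (fun x => x ≤ t)).length := by
  rw [cnt, Finset.card_def, Finset.filter_val, ← Finset.sort_eq A (· ≤ ·),
    Multiset.filter_coe, Multiset.coe_card]

lemma get_le_iff : ∀ (l : List ℕ), l.Pairwise (· < ·) → ∀ (t i : ℕ) (h : i < l.length),
    (l.get ⟨i, h⟩ ≤ t ↔ i < (l.filter (fun x => x ≤ t)).length)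
  | [], _, t, i, h => by simp at h
  | a :: l, hs, t, i, h => by
    rw [List.pairwise_cons] at hs
    obtain ⟨ha, hl⟩ := hs
    by_cases hat : a ≤ t
    · cases i with
      | zero => simp [List.filter_cons, hat]
      | succ i =>
        have h' : i < l.length := by simpa using h
        have := get_le_iff l hl t i h'
        simp only [List.filter_cons, hat, decide_true, if_pos, List.length_cons]
        simpa using this
    · have hnil : l.filter (fun x => x ≤ t) = [] := by
        rw [List.filter_eq_nil_iff]
        intro x hx
        simp only [decide_eq_true_eq]
        exact fun hxt => hat (le_trans (le_of_lt (ha x hx)) hxt)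
      have hfil : (a :: l).filter (fun x => x ≤ t) = [] := by
        simp [List.filter_cons, hat, hnil]
      rw [hfil]
      simp only [List.length_nil, Nat.not_lt_zero, iff_false]
      cases i with
      | zero => simpa using hat
      | succ i =>
        have h' : i < l.length := by simpa using h
        have hmem : l.get ⟨i, h'⟩ ∈ l := l.get_mem ⟨i, h'⟩
        have : a < l.get ⟨i, h'⟩ := ha _ hmem
        simp only [List.get]
        omega

lemma cnt_le_of_domle {A B : Finset ℕ} (h : DomLE B A) (t : ℕ) : cnt A t ≤ cnt B t := by
  obtain ⟨hcard, hget⟩ := h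
  have hla : (A.sort (· ≤ ·)).Pairwise (· < ·) :=
    List.sortedLT_iff_pairwise.1 (Finset.sortedLT_sort A)
  have hlb : (B.sort (· ≤ ·)).Pairwise (· < ·) :=
    List.sortedLT_iff_pairwise.1 (Finset.sortedLT_sort B)
  rw [cnt_eq_length_sort, cnt_eq_length_sort]
  set la := A.sort (· ≤ ·) with hladef
  set lb := B.sort (· ≤ ·) with hlbdef
  have hlen : lb.length = la.length := by
    rw [hladef, hlbdef, Finset.length_sort, Finset.length_sort, hcard]
  by_cases hca : (la.filter (fun x => x ≤ t)).length = 0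
  · omega
  · set ca := (la.filter (fun x => x ≤ t)).length with hcadef
    have h1 : ca - 1 < la.length := by
      have := List.length_filter_le (fun x => x ≤ t) la
      omega
    have h2 : ca - 1 < lb.length := by omega
    have hga : la.get ⟨ca - 1, h1⟩ ≤ t := by
      rw [get_le_iff la hla t _ h1]; omega
    have hgb : lb.get ⟨ca - 1, h2⟩ ≤ t := le_trans (hget _ h2 h1) hga
    rw [get_le_iff lb hlb t _ h2] at hgb
    omega

lemma domle_of_cnt {A B : Finset ℕ} (hcard : B.card = A.card)
    (h : ∀ t, cnt A t ≤ cnt B t) : DomLE B A := by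
  refine ⟨hcard, ?_⟩
  intro i hB hA
  have hla : (A.sort (· ≤ ·)).Pairwise (· < ·) :=
    List.sortedLT_iff_pairwise.1 (Finset.sortedLT_sort A)
  have hlb : (B.sort (· ≤ ·)).Pairwise (· < ·) :=
    List.sortedLT_iff_pairwise.1 (Finset.sortedLT_sort B)
  set t := (A.sort (· ≤ ·)).get ⟨i, hA⟩ with htdef
  have h1 : i < cnt A t := by
    rw [cnt_eq_length_sort]
    rw [← get_le_iff _ hla t i hA]
  have h2 : i < cnt B t := lt_of_lt_of_le h1 (h t)
  rw [cnt_eq_length_sort] at h2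
  exact (get_le_iff _ hlb t i hB).2 h2

end S15
namespace S15
open Finset

lemma mem_chooseFam {n r : ℕ} {A : Finset ℕ} :
    A ∈ chooseFam n r ↔ A ⊆ Finset.Icc 1 n ∧ A.card = r := Finset.mem_powersetCard

lemma bounds_of_mem {n : ℕ} {A : Finset ℕ} (hA : A ⊆ Finset.Icc 1 n) {x : ℕ} (hx : x ∈ A) :
    1 ≤ x ∧ x ≤ n := by
  have := hA hx; rw [Finset.mem_Icc] at this; exact this

lemma cnt_le_card (A : Finset ℕ) (t : ℕ) : cnt A t ≤ A.card := Finset.card_filter_le _ _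

lemma cnt_subset_le {A s : Finset ℕ} {t : ℕ} (h : ∀ z ∈ A, z ≤ t → z ∈ s) :
    cnt A t ≤ s.card := by
  apply Finset.card_le_card
  intro z hz
  rw [Finset.mem_filter] at hz
  exact h z hz.1 hz.2

lemma le_cnt_of_subset {K A : Finset ℕ} {t : ℕ} (hKA : K ⊆ A) (h : ∀ k ∈ K, k ≤ t) :
    K.card ≤ cnt A t := by
  apply Finset.card_le_card
  intro z hz
  rw [Finset.mem_filter]
  exact ⟨hKA hz, h z hz⟩

lemma one_mem_of_cnt {n : ℕ} {B : Finset ℕ} (hB : B ⊆ Finset.Icc 1 n) (h : 1 ≤ cnt B 1) :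
    1 ∈ B := by
  obtain ⟨x, hx⟩ := Finset.card_pos.1 (by omega : 0 < cnt B 1)
  rw [Finset.mem_filter] at hx
  have h1 := bounds_of_mem hB hx.1
  have hx1 : x = 1 := by omega
  subst hx1
  exact hx.1

lemma cnt_one_of_one_mem {n : ℕ} {A : Finset ℕ} (hA : A ⊆ Finset.Icc 1 n) (h1 : 1 ∈ A) :
    1 ≤ cnt A 1 := le_cnt_of_subset (by simpa using h1 : ({1} : Finset ℕ) ⊆ A) (by simp)

lemma exists_mem_between {n : ℕ} {B : Finset ℕ} (hB : B ⊆ Finset.Icc 1 n) {t : ℕ}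
    (h : 2 ≤ cnt B t) : ∃ b ∈ B, 2 ≤ b ∧ b ≤ t := by
  by_contra hc
  push_neg at hc
  have hsub : B.filter (· ≤ t) ⊆ {1} := by
    intro z hz
    rw [Finset.mem_filter] at hz
    have h1 := bounds_of_mem hB hz.1
    rcases Nat.lt_or_ge z 2 with h2 | h2
    · simp; omega
    · exact absurd (hc z hz.1 h2) (by omega)
  have := Finset.card_le_card hsub
  simp only [Finset.card_singleton] at this
  change 2 ≤ (B.filter (· ≤ t)).card at h
  omega

lemma cnt_Icc (a b t : ℕ) : cnt (Finset.Icc a b) t = min b t + 1 - a := by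
  have : (Finset.Icc a b).filter (· ≤ t) = Finset.Icc a (min b t) := by
    ext z
    simp only [Finset.mem_filter, Finset.mem_Icc, le_min_iff]
    omega
  rw [cnt, this, Nat.card_Icc]

lemma cnt_insert_of_le {s : Finset ℕ} {x t : ℕ} (hx : x ∉ s) (hxt : x ≤ t) :
    cnt (insert x s) t = 1 + cnt s t := by
  rw [cnt, Finset.filter_insert, if_pos hxt, Finset.card_insert_of_notMem
    (fun h => hx (Finset.filter_subset _ _ h)), cnt]
  omega

lemma cnt_exchange {A : Finset ℕ} {x y : ℕ} (hy : y ∈ A) (hx : x ∉ A) (hxy : x < y) (t : ℕ) :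
    cnt A t ≤ cnt (insert x (A.erase y)) t := by
  unfold cnt
  rw [Finset.filter_insert, Finset.filter_erase]
  by_cases hxt : x ≤ t
  · rw [if_pos hxt]
    have hxf : x ∉ (A.filter (· ≤ t)).erase y :=
      fun hmem => hx (Finset.filter_subset _ _ (Finset.mem_of_mem_erase hmem))
    rw [Finset.card_insert_of_notMem hxf]
    have := Finset.pred_card_le_card_erase (s := A.filter (· ≤ t)) (a := y)
    omega
  · rw [if_neg hxt, Finset.erase_eq_of_notMem
      (fun h => absurd (Finset.mem_filter.1 h).2 (by omega))]

lemma card_exchange {A : Finset ℕ} {x y : ℕ} (hy : y ∈ A) (hx : x ∉ A) (hxy : x ≠ y) :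
    (insert x (A.erase y)).card = A.card := by
  rw [Finset.card_insert_of_notMem (fun h => hx (Finset.mem_of_mem_erase h)),
    Finset.card_erase_of_mem hy]
  have : 1 ≤ A.card := Finset.card_pos.2 ⟨y, hy⟩
  omega

lemma exchange_mem_chooseFam {n r : ℕ} {A : Finset ℕ} {x y : ℕ} (hA : A ∈ chooseFam n r)
    (hy : y ∈ A) (hx : x ∉ A) (hx1 : 1 ≤ x) (hxn : x ≤ n) :
    insert x (A.erase y) ∈ chooseFam n r := by
  rw [mem_chooseFam] at hA ⊢
  constructor
  · intro z hz
    rcases Finset.mem_insert.1 hz with rfl | hz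
    · rw [Finset.mem_Icc]; omega
    · exact hA.1 (Finset.mem_of_mem_erase hz)
  · rw [card_exchange hy hx (fun h => hx (h ▸ hy)), hA.2]

lemma domle_exchange {A : Finset ℕ} {x y : ℕ} (hy : y ∈ A) (hx : x ∉ A) (hxy : x < y) :
    DomLE (insert x (A.erase y)) A :=
  domle_of_cnt (card_exchange hy hx (by omega)) (cnt_exchange hy hx hxy)

lemma exists_fresh (n : ℕ) (F : Finset ℕ) (a k : ℕ) (h : a + F.card + k ≤ n) :
    ∃ S : Finset ℕ, S ⊆ Finset.Icc 1 n ∧ S.card = k ∧ (∀ x ∈ S, a < x) ∧ Disjoint S F := by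
  have h1 : (Finset.Icc (a+1) n).card = n - a := by rw [Nat.card_Icc]; omega
  have h2 : (Finset.Icc (a+1) n).card - F.card ≤ ((Finset.Icc (a+1) n) \ F).card :=
    Finset.le_card_sdiff F _
  obtain ⟨S, hS, hcard⟩ := Finset.exists_subset_card_eq (by omega : k ≤ ((Finset.Icc (a+1) n) \ F).card)
  refine ⟨S, ?_, hcard, ?_, ?_⟩
  · intro z hz
    have := Finset.mem_sdiff.1 (hS hz)
    rw [Finset.mem_Icc] at this ⊢
    omega
  · intro z hz
    have := Finset.mem_sdiff.1 (hS hz)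
    rw [Finset.mem_Icc] at this
    omega
  · rw [Finset.disjoint_left]
    intro z hz hzF
    exact (Finset.mem_sdiff.1 (hS hz)).2 hzF

/-- counting lemma: number of members of `chooseFam` containing a fixed set `K`. -/
lemma card_superset_class (n r : ℕ) (K : Finset ℕ) :
    ((chooseFam n r).filter (fun A => K ⊆ A)).card ≤ Nat.choose n (r - K.card) := by
  have := Finset.card_le_card_of_injOn (fun A => A \ K)
    (s := (chooseFam n r).filter (fun A => K ⊆ A))
    (t := (Finset.Icc 1 n).powersetCard (r - K.card)) ?_ ?_
  · rwa [Finset.card_powersetCard, Nat.card_Icc, show n + 1 - 1 = n from rfl] at this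
  · intro A hA
    rw [Finset.mem_coe, Finset.mem_filter, mem_chooseFam] at hA
    rw [Finset.mem_coe, Finset.mem_powersetCard]
    exact ⟨fun z hz => hA.1.1 (Finset.mem_sdiff.1 hz).1,
      by rw [Finset.card_sdiff_of_subset hA.2, hA.1.2]⟩
  · intro A hA B hB hAB
    simp only [Finset.coe_filter, Set.mem_setOf_eq] at hA hB
    have hAB' : A \ K = B \ K := hAB
    have : A \ K ∪ K = B \ K ∪ K := by rw [hAB']
    rwa [Finset.sdiff_union_of_subset hA.2, Finset.sdiff_union_of_subset hB.2] at this

end S15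
namespace S15
open Finset

lemma mem_canonGen {n r : ℕ} {𝒜 : Finset (Finset ℕ)} {G : Finset ℕ} :
    G ∈ canonGen n r 𝒜 ↔ G ⊆ Finset.Icc 1 n ∧ PotGen n r 𝒜 G ∧
      ∀ G' ⊆ G, PotGen n r 𝒜 G' → G' = G := by
  classical
  simp [canonGen, Finset.mem_filter, Finset.mem_powerset, and_assoc]

lemma exists_min_potgen {n r : ℕ} {𝒜 : Finset (Finset ℕ)} {G : Finset ℕ}
    (hG : PotGen n r 𝒜 G) : ∃ G', G' ⊆ G ∧ G' ∈ canonGen n r 𝒜 ∧ G'.card ≤ G.card := by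
  classical
  set s := G.powerset.filter (fun H => PotGen n r 𝒜 H) with hs
  have hGs : G ∈ s := by
    rw [hs, Finset.mem_filter, Finset.mem_powerset]
    exact ⟨Finset.Subset.refl G, hG⟩
  obtain ⟨G', hG's, hmin⟩ := Finset.exists_min_image s Finset.card ⟨G, hGs⟩
  rw [hs, Finset.mem_filter, Finset.mem_powerset] at hG's
  refine ⟨G', hG's.1, ?_, Finset.card_le_card hG's.1⟩
  rw [mem_canonGen]
  refine ⟨hG's.2.1, hG's.2, ?_⟩
  intro G'' hG'' hpot
  have hG''s : G'' ∈ s := by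
    rw [hs, Finset.mem_filter, Finset.mem_powerset]
    exact ⟨hG''.trans hG's.1, hpot⟩
  exact Finset.eq_of_subset_of_card_le hG'' (hmin G'' hG''s)

/-- Convenient bundle of the hypotheses. -/
structure Good (n r j : ℕ) (𝒜 : Finset (Finset ℕ)) : Prop where
  hr : 3 ≤ r
  hj2 : 2 ≤ j
  hjr : j ≤ r + 1
  hn : 2 ^ (r + 2) * r ^ 3 + 16 * r + 16 ≤ n
  hmem : MemI n r j 𝒜

namespace Good

variable {n r j : ℕ} {𝒜 : Finset (Finset ℕ)} (hg : Good n r j 𝒜)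

include hg

lemma hsub : 𝒜 ⊆ chooseFam n r := hg.hmem.1.1.1
lemma hint : IntersectingFam 𝒜 := hg.hmem.1.1.2.1
lemma hcomp : LeftCompressed n r 𝒜 := hg.hmem.1.1.2.2
lemma hmax : ∀ ℬ : Finset (Finset ℕ), IsLCIF n r ℬ → 𝒜 ⊆ ℬ → ℬ = 𝒜 := hg.hmem.1.2
lemma hrank : rankFam n r 𝒜 = 2 := hg.hmem.2.1
lemma hgens : (canonGen n r 𝒜).filter (fun G => G.card = 2) =
    (Finset.Icc 2 j).image (fun i => ({1, i} : Finset ℕ)) := hg.hmem.2.2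
lemma hrn : 4 * r + 16 ≤ n := by
  have h := hg.hn
  have h2 : 0 ≤ 2 ^ (r + 2) * r ^ 3 := Nat.zero_le _
  omega

lemma no_small {G : Finset ℕ} (hG : PotGen n r 𝒜 G) : 2 ≤ G.card := by
  by_contra hc
  obtain ⟨G', _, hG'c, hG'card⟩ := exists_min_potgen hG
  have h1 : G'.card ∈ {k : ℕ | ∃ G ∈ canonGen n r 𝒜, G.card = k} := ⟨G', hG'c, rfl⟩
  have h2 := Nat.sInf_le h1
  rw [← rankFam, hg.hrank] at h2
  omega

lemma potGen_pair {i : ℕ} (hi2 : 2 ≤ i) (hij : i ≤ j) : PotGen n r 𝒜 {1, i} := by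
  have hmem : ({1, i} : Finset ℕ) ∈ (Finset.Icc 2 j).image (fun i => ({1, i} : Finset ℕ)) :=
    Finset.mem_image.2 ⟨i, Finset.mem_Icc.2 ⟨hi2, hij⟩, rfl⟩
  rw [← hg.hgens, Finset.mem_filter, mem_canonGen] at hmem
  exact hmem.1.2.1

lemma two_gen {G : Finset ℕ} (hG : PotGen n r 𝒜 G) (hcard : G.card = 2) :
    ∃ i, 2 ≤ i ∧ i ≤ j ∧ G = {1, i} := by
  obtain ⟨G', hsubG, hG'c, hG'card⟩ := exists_min_potgen hG
  have h2 : 2 ≤ G'.card := hg.no_small (mem_canonGen.1 hG'c).2.1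
  have hGG : G' = G := Finset.eq_of_subset_of_card_le hsubG (by omega)
  subst hGG
  have : G' ∈ (canonGen n r 𝒜).filter (fun G => G.card = 2) :=
    Finset.mem_filter.2 ⟨hG'c, hcard⟩
  rw [hg.hgens, Finset.mem_image] at this
  obtain ⟨i, hi, heq⟩ := this
  rw [Finset.mem_Icc] at hi
  exact ⟨i, hi.1, hi.2, heq.symm⟩

lemma core_mem {A : Finset ℕ} (hA : A ∈ chooseFam n r) (h1 : 1 ∈ A)
    (h2 : (A ∩ Finset.Icc 2 j).Nonempty) : A ∈ 𝒜 := by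
  obtain ⟨i, hi⟩ := h2
  rw [Finset.mem_inter, Finset.mem_Icc] at hi
  refine (hg.potGen_pair hi.2.1 hi.2.2).2 A hA ?_
  intro z hz
  rcases Finset.mem_insert.1 hz with rfl | hz
  · exact h1
  · rw [Finset.mem_singleton.1 hz]; exact hi.1

lemma struct {A : Finset ℕ} (hA : A ∈ 𝒜) : 1 ∈ A ∨ Finset.Icc 2 j ⊆ A := by
  by_contra hc
  push_neg at hc
  obtain ⟨h1, hns⟩ := hc
  obtain ⟨i, hi, hiA⟩ := Finset.not_subset.1 hns
  rw [Finset.mem_Icc] at hi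
  have hAc := hg.hsub hA
  rw [mem_chooseFam] at hAc
  obtain ⟨S, hS1, hS2, hS3, hS4⟩ := exists_fresh n A (2 * r + 2) (r - 2)
    (by have := hg.hrn; have := hAc.2; omega)
  set B := insert 1 (insert i S) with hB
  have h1S : (1 : ℕ) ∉ S := fun h => by have := hS3 1 h; omega
  have hiS : i ∉ S := fun h => by have := hS3 i h; have := hg.hjr; omega
  have hBc : B ∈ chooseFam n r := by
    rw [mem_chooseFam]
    constructor
    · intro z hz
      rw [Finset.mem_Icc]
      rcases Finset.mem_insert.1 hz with rfl | hz
      · have := hg.hrn; omega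
      · rcases Finset.mem_insert.1 hz with rfl | hz
        · have := hg.hrn; have := hg.hjr; omega
        · exact Finset.mem_Icc.1 (hS1 hz)
    · rw [hB, Finset.card_insert_of_notMem, Finset.card_insert_of_notMem hiS, hS2]
      · have := hg.hr; omega
      · intro h
        rcases Finset.mem_insert.1 h with h | h
        · omega
        · exact h1S h
  have hB𝒜 : B ∈ 𝒜 := by
    refine (hg.potGen_pair hi.1 hi.2).2 B hBc ?_
    intro z hz
    rcases Finset.mem_insert.1 hz with rfl | hz
    · exact Finset.mem_insert_self _ _
    · rw [Finset.mem_singleton.1 hz]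
      exact Finset.mem_insert_of_mem (Finset.mem_insert_self _ _)
  obtain ⟨x, hx⟩ := hg.hint A hA B hB𝒜
  rw [Finset.mem_inter] at hx
  rcases Finset.mem_insert.1 hx.2 with rfl | h
  · exact h1 hx.1
  · rcases Finset.mem_insert.1 h with rfl | h
    · exact hiA hx.1
    · exact (Finset.disjoint_left.1 hS4) h hx.1

lemma exists_D2 : ∃ D ∈ 𝒜, 1 ∉ D := by
  by_contra hc
  push_neg at hc
  set ℬ := 𝒜 ∪ (chooseFam n r).filter (fun A => 1 ∈ A) with hℬ
  have hlcif : IsLCIF n r ℬ := by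
    refine ⟨Finset.union_subset hg.hsub (Finset.filter_subset _ _), ?_, ?_⟩
    · intro A hA B hB
      have h1A : 1 ∈ A := by
        rcases Finset.mem_union.1 hA with h | h
        · exact hc A h
        · exact (Finset.mem_filter.1 h).2
      have h1B : 1 ∈ B := by
        rcases Finset.mem_union.1 hB with h | h
        · exact hc B h
        · exact (Finset.mem_filter.1 h).2
      exact ⟨1, Finset.mem_inter.2 ⟨h1A, h1B⟩⟩
    · intro A hA B hB hdom
      rcases Finset.mem_union.1 hA with h | h
      · exact Finset.mem_union_left _ (hg.hcomp A h B hB hdom)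
      · have h1A : 1 ∈ A := (Finset.mem_filter.1 h).2
        have hAc : A ⊆ Finset.Icc 1 n := (mem_chooseFam.1 (Finset.filter_subset _ _ h)).1
        have hBc : B ⊆ Finset.Icc 1 n := (mem_chooseFam.1 hB).1
        have h1B : 1 ∈ B := one_mem_of_cnt hBc
          (le_trans (cnt_one_of_one_mem hAc h1A) (cnt_le_of_domle hdom 1))
        exact Finset.mem_union_right _ (Finset.mem_filter.2 ⟨hB, h1B⟩)
  have heq := hg.hmax ℬ hlcif Finset.subset_union_left
  have hpot : PotGen n r 𝒜 {1} := by
    constructor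
    · intro z hz
      rw [Finset.mem_singleton.1 hz, Finset.mem_Icc]
      have := hg.hrn; omega
    · intro A hA h1
      have : A ∈ ℬ := Finset.mem_union_right _
        (Finset.mem_filter.2 ⟨hA, h1 (Finset.mem_singleton_self 1)⟩)
      rwa [heq] at this
  have := hg.no_small hpot
  simp at this

lemma base_mem : Finset.Icc 2 (r + 1) ∈ 𝒜 := by
  obtain ⟨D, hD, h1D⟩ := hg.exists_D2
  have hDc := mem_chooseFam.1 (hg.hsub hD)
  have hBc : Finset.Icc 2 (r + 1) ∈ chooseFam n r := by
    rw [mem_chooseFam]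
    constructor
    · intro z hz
      rw [Finset.mem_Icc] at hz ⊢
      have := hg.hrn; omega
    · rw [Nat.card_Icc]; omega
  refine hg.hcomp D hD _ hBc (domle_of_cnt ?_ ?_)
  · rw [(mem_chooseFam.1 hBc).2, hDc.2]
  · intro t
    have e1 : cnt D t ≤ (Finset.Icc 2 t).card := by
      apply cnt_subset_le
      intro z hz hzt
      have := bounds_of_mem hDc.1 hz
      rw [Finset.mem_Icc]
      refine ⟨?_, hzt⟩
      rcases Nat.lt_or_ge z 2 with h | h
      · exfalso; have : z = 1 := by omega
        exact h1D (this ▸ hz)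
      · exact h
    rw [Nat.card_Icc] at e1
    have e2 : cnt D t ≤ r := hDc.2 ▸ cnt_le_card D t
    rw [cnt_Icc]
    omega

end Good
end S15
namespace S15

lemma filter_Icc_le (a b t : ℕ) :
    (Finset.Icc a b).filter (· ≤ t) = Finset.Icc a (min b t) := by
  ext z
  simp only [Finset.mem_filter, Finset.mem_Icc, le_min_iff]
  omega

namespace Good
open Finset

variable {n r j : ℕ} {𝒜 : Finset (Finset ℕ)} (hg : Good n r j 𝒜)

include hg

lemma not_potgen_onepair {y : ℕ} (hy : j < y) : ¬ PotGen n r 𝒜 {1, y} := by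
  intro hpot
  have hy1 : y ≠ 1 := by have := hg.hj2; omega
  have hcard : ({1, y} : Finset ℕ).card = 2 := by
    rw [Finset.card_insert_of_notMem (by simp [eq_comm]; omega), Finset.card_singleton]
  obtain ⟨i, hi2, hij, heq⟩ := hg.two_gen hpot hcard
  have : y ∈ ({1, i} : Finset ℕ) := by
    rw [← heq]; simp
  rcases Finset.mem_insert.1 this with h | h
  · omega
  · rw [Finset.mem_singleton] at h; omega

lemma exists_D2_nj1 (hjr' : j ≤ r) : ∃ D ∈ 𝒜, 1 ∉ D ∧ j + 1 ∉ D := by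
  by_contra hc
  push_neg at hc
  set 𝒞 := (chooseFam n r).filter
    (fun A => 1 ∈ A ∧ j + 1 ∈ A ∧ A ∩ Finset.Icc 2 j = ∅) with h𝒞
  have h𝒞mem : ∀ A ∈ 𝒞, 1 ∈ A ∧ j + 1 ∈ A ∧ A ∩ Finset.Icc 2 j = ∅ :=
    fun A hA => (Finset.mem_filter.1 hA).2
  set ℬ := 𝒜 ∪ 𝒞 with hℬ
  have hlcif : IsLCIF n r ℬ := by
    refine ⟨Finset.union_subset hg.hsub (Finset.filter_subset _ _), ?_, ?_⟩
    · -- intersecting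
      have key : ∀ A ∈ ℬ, ∀ B ∈ 𝒞, (A ∩ B).Nonempty := by
        intro A hA B hB
        obtain ⟨h1B, hj1B, _⟩ := h𝒞mem B hB
        rcases Finset.mem_union.1 hA with h | h
        · by_cases h1A : 1 ∈ A
          · exact ⟨1, Finset.mem_inter.2 ⟨h1A, h1B⟩⟩
          · exact ⟨j + 1, Finset.mem_inter.2 ⟨hc A h h1A, hj1B⟩⟩
        · exact ⟨1, Finset.mem_inter.2 ⟨(h𝒞mem A h).1, h1B⟩⟩
      intro A hA B hB
      rcases Finset.mem_union.1 hB with h | h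
      · rcases Finset.mem_union.1 hA with h' | h'
        · exact hg.hint A h' B h
        · obtain ⟨x, hx⟩ := key B (Finset.mem_union_left _ h) A h'
          rw [Finset.mem_inter] at hx
          exact ⟨x, Finset.mem_inter.2 ⟨hx.2, hx.1⟩⟩
      · exact key A hA B h
    · -- left-compressed
      intro A hA B hB hdom
      rcases Finset.mem_union.1 hA with h | h
      · exact Finset.mem_union_left _ (hg.hcomp A h B hB hdom)
      · obtain ⟨h1A, hj1A, _⟩ := h𝒞mem A h
        have hAc : A ⊆ Finset.Icc 1 n := (mem_chooseFam.1 (Finset.filter_subset _ _ h)).1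
        have hBc : B ⊆ Finset.Icc 1 n := (mem_chooseFam.1 hB).1
        have h1B : 1 ∈ B := one_mem_of_cnt hBc
          (le_trans (cnt_one_of_one_mem hAc h1A) (cnt_le_of_domle hdom 1))
        have hj2' := hg.hj2
        have hK : ({1, j + 1} : Finset ℕ) ⊆ A := by
          intro z hz
          rcases Finset.mem_insert.1 hz with rfl | hz
          · exact h1A
          · rw [Finset.mem_singleton.1 hz]; exact hj1A
        have hKcard : ({1, j + 1} : Finset ℕ).card = 2 := by
          rw [Finset.card_insert_of_notMem (by simp; omega), Finset.card_singleton]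
        have hcntA : 2 ≤ cnt A (j + 1) := by
          have := le_cnt_of_subset (t := j + 1) hK (fun k hk => by
            rcases Finset.mem_insert.1 hk with rfl | hk
            · omega
            · rw [Finset.mem_singleton.1 hk])
          omega
        have hcntB : 2 ≤ cnt B (j + 1) := le_trans hcntA (cnt_le_of_domle hdom _)
        obtain ⟨b, hbB, hb2, hbj1⟩ := exists_mem_between hBc hcntB
        by_cases hBj : (B ∩ Finset.Icc 2 j).Nonempty
        · exact Finset.mem_union_left _ (hg.core_mem hB h1B hBj)
        · rw [Finset.not_nonempty_iff_eq_empty] at hBj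
          have hbj : b = j + 1 := by
            rcases Nat.lt_or_ge b (j + 1) with h' | h'
            · exfalso
              have : b ∈ B ∩ Finset.Icc 2 j :=
                Finset.mem_inter.2 ⟨hbB, Finset.mem_Icc.2 ⟨hb2, by omega⟩⟩
              rw [hBj] at this
              exact Finset.notMem_empty b this
            · omega
          refine Finset.mem_union_right _ (Finset.mem_filter.2 ⟨hB, h1B, hbj ▸ hbB, hBj⟩)
  have heq := hg.hmax ℬ hlcif Finset.subset_union_left
  have hpot : PotGen n r 𝒜 {1, j + 1} := by
    constructor
    · intro z hz
      have hn := hg.hrn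
      have hjr := hg.hjr
      rcases Finset.mem_insert.1 hz with rfl | hz
      · rw [Finset.mem_Icc]; omega
      · rw [Finset.mem_singleton.1 hz, Finset.mem_Icc]; omega
    · intro A hA hsubA
      have h1A : 1 ∈ A := hsubA (Finset.mem_insert_self _ _)
      have hj1A : j + 1 ∈ A := hsubA (by simp)
      by_cases hAj : (A ∩ Finset.Icc 2 j).Nonempty
      · exact hg.core_mem hA h1A hAj
      · rw [Finset.not_nonempty_iff_eq_empty] at hAj
        have : A ∈ ℬ := Finset.mem_union_right _ (Finset.mem_filter.2 ⟨hA, h1A, hj1A, hAj⟩)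
        rwa [heq] at this
  exact hg.not_potgen_onepair (by omega) hpot

lemma exists_D2_ny (hjr' : j ≤ r) {y : ℕ} (hy1 : j + 1 ≤ y) (hy2 : y ≤ r + 1) :
    ∃ D ∈ 𝒜, 1 ∉ D ∧ y ∉ D := by
  obtain ⟨D0, hD0, h1, hj1⟩ := hg.exists_D2_nj1 hjr'
  rcases Nat.eq_or_lt_of_le hy1 with heq | hlt
  · exact ⟨D0, hD0, h1, heq ▸ hj1⟩
  · by_contra hc
    push_neg at hc
    have hyD0 : y ∈ D0 := hc D0 hD0 h1
    have hD0c := hg.hsub hD0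
    have hj1y : (j + 1 : ℕ) < y := hlt
    have hj1n : j + 1 ≤ n := by have := hg.hrn; have := hg.hjr; omega
    set D' := insert (j + 1) (D0.erase y) with hD'
    have hD'c : D' ∈ chooseFam n r :=
      exchange_mem_chooseFam hD0c hyD0 hj1 (by omega) hj1n
    have hD'𝒜 : D' ∈ 𝒜 := hg.hcomp D0 hD0 D' hD'c (domle_exchange hyD0 hj1 hj1y)
    have h1D' : 1 ∉ D' := by
      intro h
      rcases Finset.mem_insert.1 h with h | h
      · have := hg.hj2; omega
      · exact h1 (Finset.mem_of_mem_erase h)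
    have := hc D' hD'𝒜 h1D'
    rcases Finset.mem_insert.1 this with h | h
    · omega
    · exact absurd h (Finset.notMem_erase y D0)

lemma window_D1 (hjr' : j ≤ r) {A : Finset ℕ} (hA : A ∈ 𝒜) (h1 : 1 ∈ A)
    (h2 : A ∩ Finset.Icc 2 j = ∅) :
    2 ≤ (A ∩ Finset.Icc (j + 1) (r + 2)).card := by
  obtain ⟨y, hy⟩ := hg.hint A hA _ hg.base_mem
  rw [Finset.mem_inter, Finset.mem_Icc] at hy
  obtain ⟨hyA, hy2, hyr1⟩ := hy
  have hyj : j + 1 ≤ y := by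
    rcases Nat.lt_or_ge y (j + 1) with h | h
    · exfalso
      have : y ∈ A ∩ Finset.Icc 2 j := Finset.mem_inter.2 ⟨hyA, Finset.mem_Icc.2 ⟨hy2, by omega⟩⟩
      rw [h2] at this
      exact Finset.notMem_empty y this
    · exact h
  obtain ⟨Dy, hDy, h1Dy, hyDy⟩ := hg.exists_D2_ny hjr' hyj hyr1
  have hDyc := mem_chooseFam.1 (hg.hsub hDy)
  set E := (Finset.Icc 2 (r + 2)).erase y with hE
  have hyIcc : y ∈ Finset.Icc 2 (r + 2) := Finset.mem_Icc.2 ⟨hy2, by omega⟩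
  have hEc : E ∈ chooseFam n r := by
    rw [mem_chooseFam]
    constructor
    · intro z hz
      have := Finset.mem_Icc.1 (Finset.mem_of_mem_erase hz)
      rw [Finset.mem_Icc]
      have := hg.hrn; omega
    · rw [Finset.card_erase_of_mem hyIcc, Nat.card_Icc]; omega
  have hE𝒜 : E ∈ 𝒜 := by
    refine hg.hcomp Dy hDy E hEc (domle_of_cnt ?_ ?_)
    · rw [hDyc.2, (mem_chooseFam.1 hEc).2]
    · intro t
      have hcntE : cnt E t = ((Finset.Icc 2 (min (r + 2) t)).erase y).card := by
        rw [cnt, hE, Finset.filter_erase, filter_Icc_le]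
      have hbound : cnt Dy t ≤ ((Finset.Icc 2 t).erase y).card := by
        apply cnt_subset_le
        intro z hz hzt
        have hzb := bounds_of_mem hDyc.1 hz
        rw [Finset.mem_erase, Finset.mem_Icc]
        refine ⟨fun h => hyDy (h ▸ hz), ?_, hzt⟩
        rcases Nat.lt_or_ge z 2 with h | h
        · exfalso
          have : z = 1 := by omega
          exact h1Dy (this ▸ hz)
        · exact h
      have hbound2 : cnt Dy t ≤ r := hDyc.2 ▸ cnt_le_card Dy t
      by_cases hyt : y ≤ t
      · have h1 : ((Finset.Icc 2 t).erase y).card = (t + 1 - 2) - 1 := by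
          rw [Finset.card_erase_of_mem (Finset.mem_Icc.2 ⟨hy2, hyt⟩), Nat.card_Icc]
        have h2' : y ∈ Finset.Icc 2 (min (r + 2) t) := by
          rw [Finset.mem_Icc]; omega
        have h3 : cnt E t = (min (r + 2) t + 1 - 2) - 1 := by
          rw [hcntE, Finset.card_erase_of_mem h2', Nat.card_Icc]
        omega
      · have h1 : ((Finset.Icc 2 t).erase y).card = t + 1 - 2 := by
          rw [Finset.erase_eq_of_notMem (fun h => hyt (Finset.mem_Icc.1 h).2), Nat.card_Icc]
        have h3 : cnt E t = min (r + 2) t + 1 - 2 := by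
          rw [hcntE, Finset.erase_eq_of_notMem
            (fun h => hyt (le_trans (Finset.mem_Icc.1 h).2 (min_le_right _ _))), Nat.card_Icc]
        omega
  obtain ⟨z, hz⟩ := hg.hint A hA E hE𝒜
  rw [Finset.mem_inter, hE, Finset.mem_erase] at hz
  obtain ⟨hzA, hzy, hzIcc⟩ := hz
  rw [Finset.mem_Icc] at hzIcc
  have hzj : j + 1 ≤ z := by
    rcases Nat.lt_or_ge z (j + 1) with h | h
    · exfalso
      have : z ∈ A ∩ Finset.Icc 2 j :=
        Finset.mem_inter.2 ⟨hzA, Finset.mem_Icc.2 ⟨hzIcc.1, by omega⟩⟩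
      rw [h2] at this
      exact Finset.notMem_empty z this
    · exact h
  apply Finset.one_lt_card.2
  refine ⟨y, ?_, z, ?_, fun h => hzy h.symm⟩
  · exact Finset.mem_inter.2 ⟨hyA, Finset.mem_Icc.2 ⟨hyj, by omega⟩⟩
  · exact Finset.mem_inter.2 ⟨hzA, Finset.mem_Icc.2 ⟨hzj, hzIcc.2⟩⟩

end Good
end S15
namespace S15
open Finset

def D1set (j : ℕ) (𝒜 : Finset (Finset ℕ)) : Finset (Finset ℕ) :=
  𝒜.filter (fun A => 1 ∈ A ∧ A ∩ Finset.Icc 2 j = ∅)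

def D2set (𝒜 : Finset (Finset ℕ)) : Finset (Finset ℕ) :=
  𝒜.filter (fun A => 1 ∉ A)

lemma choose_two_le_sq (w : ℕ) : w.choose 2 ≤ w ^ 2 := by
  rw [Nat.choose_two_right]
  calc w * (w - 1) / 2 ≤ w * (w - 1) := Nat.div_le_self _ _
    _ ≤ w * w := Nat.mul_le_mul_left w (by omega)
    _ = w ^ 2 := (sq w).symm

lemma choose_le_choose_right {N a b : ℕ} (hab : a ≤ b) (hb : 2 * b ≤ N) :
    N.choose a ≤ N.choose b := by
  induction b with
  | zero => simp [Nat.le_zero.1 hab]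
  | succ b ih =>
    rcases Nat.eq_or_lt_of_le hab with rfl | h
    · exact le_refl _
    · have hab' : a ≤ b := by omega
      refine le_trans (ih hab' (by omega)) (Nat.choose_le_succ_of_lt_half_left ?_)
      omega

/-- two elements in a window `W`, plus a fixed element `c`. -/
lemma window_count (n r c : ℕ) (W : Finset ℕ) (hcW : c ∉ W) (F : Finset (Finset ℕ))
    (hF : ∀ A ∈ F, A ∈ chooseFam n r ∧ c ∈ A ∧ 2 ≤ (A ∩ W).card) :
    F.card ≤ W.card ^ 2 * Nat.choose n (r - 3) := by
  classical
  have hsub : F ⊆ (W.powersetCard 2).biUnion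
      (fun P => (chooseFam n r).filter (fun A => insert c P ⊆ A)) := by
    intro A hA
    obtain ⟨hAc, hcA, hwin⟩ := hF A hA
    obtain ⟨P, hPsub, hPcard⟩ := Finset.exists_subset_card_eq hwin
    refine Finset.mem_biUnion.2 ⟨P, ?_, Finset.mem_filter.2 ⟨hAc, ?_⟩⟩
    · exact Finset.mem_powersetCard.2
        ⟨fun z hz => (Finset.mem_inter.1 (hPsub hz)).2, hPcard⟩
    · intro z hz
      rcases Finset.mem_insert.1 hz with rfl | hz
      · exact hcA
      · exact (Finset.mem_inter.1 (hPsub hz)).1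
  refine le_trans (Finset.card_le_card hsub) (le_trans (Finset.card_biUnion_le) ?_)
  have hper : ∀ P ∈ W.powersetCard 2,
      ((chooseFam n r).filter (fun A => insert c P ⊆ A)).card ≤ Nat.choose n (r - 3) := by
    intro P hP
    rw [Finset.mem_powersetCard] at hP
    have hcard : (insert c P).card = 3 := by
      rw [Finset.card_insert_of_notMem (fun h => hcW (hP.1 h)), hP.2]
    have := card_superset_class n r (insert c P)
    rwa [hcard] at this
  calc ∑ P ∈ W.powersetCard 2, ((chooseFam n r).filter (fun A => insert c P ⊆ A)).card
      ≤ (W.powersetCard 2).card * Nat.choose n (r - 3) :=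
        Finset.sum_le_card_nsmul _ _ _ hper
    _ ≤ W.card ^ 2 * Nat.choose n (r - 3) := by
        rw [Finset.card_powersetCard]
        exact Nat.mul_le_mul_right _ (choose_two_le_sq _)

/-- one element in a window `W`, plus a fixed pair `K0`. -/
lemma window_count1 (n r : ℕ) (K0 : Finset ℕ) (W : Finset ℕ) (hW : Disjoint K0 W)
    (hK0 : K0.card = 2) (F : Finset (Finset ℕ))
    (hF : ∀ A ∈ F, A ∈ chooseFam n r ∧ K0 ⊆ A ∧ (A ∩ W).Nonempty) :
    F.card ≤ W.card * Nat.choose n (r - 3) := by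
  classical
  have hsub : F ⊆ W.biUnion
      (fun w => (chooseFam n r).filter (fun A => insert w K0 ⊆ A)) := by
    intro A hA
    obtain ⟨hAc, hKA, w, hw⟩ := hF A hA
    rw [Finset.mem_inter] at hw
    refine Finset.mem_biUnion.2 ⟨w, hw.2, Finset.mem_filter.2 ⟨hAc, ?_⟩⟩
    intro z hz
    rcases Finset.mem_insert.1 hz with rfl | hz
    · exact hw.1
    · exact hKA hz
  refine le_trans (Finset.card_le_card hsub) (le_trans (Finset.card_biUnion_le) ?_)
  have hper : ∀ w ∈ W,
      ((chooseFam n r).filter (fun A => insert w K0 ⊆ A)).card ≤ Nat.choose n (r - 3) := by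
    intro w hw
    have hcard : (insert w K0).card = 3 := by
      rw [Finset.card_insert_of_notMem (fun h => (Finset.disjoint_right.1 hW) hw h), hK0]
    have := card_superset_class n r (insert w K0)
    rwa [hcard] at this
  exact Finset.sum_le_card_nsmul _ _ _ hper

namespace Good

variable {n r j : ℕ} {𝒜 : Finset (Finset ℕ)} (hg : Good n r j 𝒜)

include hg

lemma card_D1_le (hjr' : j ≤ r) :
    (D1set j 𝒜).card ≤ r ^ 2 * Nat.choose n (r - 3) := by
  have h1 : (1 : ℕ) ∉ Finset.Icc (j + 1) (r + 2) := by
    rw [Finset.mem_Icc]; have := hg.hj2; omega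
  refine le_trans (window_count n r 1 (Finset.Icc (j + 1) (r + 2)) h1 _ ?_) ?_
  · intro A hA
    rw [D1set, Finset.mem_filter] at hA
    exact ⟨hg.hsub hA.1, hA.2.1, hg.window_D1 hjr' hA.1 hA.2.1 hA.2.2⟩
  · apply Nat.mul_le_mul_right
    rw [Nat.card_Icc]
    have := hg.hj2
    exact Nat.pow_le_pow_left (by omega) 2

lemma D1_nonempty_j3 (hj : j = 3) : ∃ A ∈ 𝒜, 1 ∈ A ∧ A ∩ Finset.Icc 2 j = ∅ := by
  subst hj
  by_contra hc
  push_neg at hc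
  have hc' : ∀ A ∈ 𝒜, 1 ∈ A → (A ∩ Finset.Icc 2 3).Nonempty := by
    intro A hA h1
    rcases Finset.eq_empty_or_nonempty (A ∩ Finset.Icc 2 3) with h | h
    · exact absurd h (Finset.nonempty_iff_ne_empty.1 (hc A hA h1))
    · exact h
  set 𝒞 := (chooseFam n r).filter (fun A => Finset.Icc 2 3 ⊆ A ∧ 1 ∉ A) with h𝒞
  set ℬ := 𝒜 ∪ 𝒞 with hℬ
  have h2C : ∀ C ∈ 𝒞, Finset.Icc 2 3 ⊆ C ∧ 1 ∉ C := fun C hC => (Finset.mem_filter.1 hC).2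
  have key : ∀ A ∈ ℬ, ∀ C ∈ 𝒞, (A ∩ C).Nonempty := by
    intro A hA C hC
    obtain ⟨hsubC, h1C⟩ := h2C C hC
    have h2 : (2 : ℕ) ∈ C := hsubC (Finset.mem_Icc.2 (by omega))
    rcases Finset.mem_union.1 hA with h | h
    · by_cases h1A : 1 ∈ A
      · obtain ⟨x, hx⟩ := hc' A h h1A
        rw [Finset.mem_inter] at hx
        exact ⟨x, Finset.mem_inter.2 ⟨hx.1, hsubC hx.2⟩⟩
      · rcases hg.struct h with h' | h'
        · exact absurd h' h1A
        · exact ⟨2, Finset.mem_inter.2 ⟨h' (Finset.mem_Icc.2 (by omega)), h2⟩⟩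
    · exact ⟨2, Finset.mem_inter.2 ⟨(h2C A h).1 (Finset.mem_Icc.2 (by omega)), h2⟩⟩
  have hlcif : IsLCIF n r ℬ := by
    refine ⟨Finset.union_subset hg.hsub (Finset.filter_subset _ _), ?_, ?_⟩
    · intro A hA B hB
      rcases Finset.mem_union.1 hB with h | h
      · rcases Finset.mem_union.1 hA with h' | h'
        · exact hg.hint A h' B h
        · obtain ⟨x, hx⟩ := key B (Finset.mem_union_left _ h) A h'
          rw [Finset.mem_inter] at hx
          exact ⟨x, Finset.mem_inter.2 ⟨hx.2, hx.1⟩⟩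
      · exact key A hA B h
    · intro A hA B hB hdom
      rcases Finset.mem_union.1 hA with h | h
      · exact Finset.mem_union_left _ (hg.hcomp A h B hB hdom)
      · obtain ⟨hsubA, h1A⟩ := h2C A h
        have hAc : A ⊆ Finset.Icc 1 n := (mem_chooseFam.1 (Finset.filter_subset _ _ h)).1
        have hBc : B ⊆ Finset.Icc 1 n := (mem_chooseFam.1 hB).1
        have hcntA : 2 ≤ cnt A 3 := by
          have := le_cnt_of_subset (t := 3) hsubA
            (fun k hk => by rw [Finset.mem_Icc] at hk; omega)
          rw [Nat.card_Icc] at this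
          omega
        have hcntB : 2 ≤ cnt B 3 := le_trans hcntA (cnt_le_of_domle hdom _)
        by_cases h1B : 1 ∈ B
        · obtain ⟨b, hbB, hb2, hb3⟩ := exists_mem_between hBc hcntB
          refine Finset.mem_union_left _ (hg.core_mem hB h1B ⟨b, ?_⟩)
          exact Finset.mem_inter.2 ⟨hbB, Finset.mem_Icc.2 ⟨hb2, hb3⟩⟩
        · have hsubB : B.filter (· ≤ 3) ⊆ ({2, 3} : Finset ℕ) := by
            intro z hz
            rw [Finset.mem_filter] at hz
            have hzb := bounds_of_mem hBc hz.1
            have hz1 : z ≠ 1 := fun h => h1B (h ▸ hz.1)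
            simp only [Finset.mem_insert, Finset.mem_singleton]
            omega
          have h23 : B.filter (· ≤ 3) = ({2, 3} : Finset ℕ) := by
            apply Finset.eq_of_subset_of_card_le hsubB
            have : ({2, 3} : Finset ℕ).card = 2 := by decide
            rw [this]
            exact hcntB
          have h2B : (2 : ℕ) ∈ B := by
            have : (2 : ℕ) ∈ B.filter (· ≤ 3) := h23 ▸ (by decide : (2:ℕ) ∈ ({2,3} : Finset ℕ))
            exact (Finset.mem_filter.1 this).1
          have h3B : (3 : ℕ) ∈ B := by
            have : (3 : ℕ) ∈ B.filter (· ≤ 3) := h23 ▸ (by decide : (3:ℕ) ∈ ({2,3} : Finset ℕ))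
            exact (Finset.mem_filter.1 this).1
          refine Finset.mem_union_right _ (Finset.mem_filter.2 ⟨hB, ?_, h1B⟩)
          intro z hz
          rw [Finset.mem_Icc] at hz
          rcases (by omega : z = 2 ∨ z = 3) with rfl | rfl
          · exact h2B
          · exact h3B
  have heq := hg.hmax ℬ hlcif Finset.subset_union_left
  have hpot : PotGen n r 𝒜 {2, 3} := by
    constructor
    · intro z hz
      have hn := hg.hrn
      rcases Finset.mem_insert.1 hz with rfl | hz
      · rw [Finset.mem_Icc]; omega
      · rw [Finset.mem_singleton.1 hz, Finset.mem_Icc]; omega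
    · intro A hA hsubA
      have h2A : (2 : ℕ) ∈ A := hsubA (Finset.mem_insert_self _ _)
      by_cases h1A : 1 ∈ A
      · exact hg.core_mem hA h1A ⟨2, Finset.mem_inter.2 ⟨h2A, Finset.mem_Icc.2 (by omega)⟩⟩
      · have : A ∈ ℬ := Finset.mem_union_right _ (Finset.mem_filter.2 ⟨hA, by
          intro z hz
          rw [Finset.mem_Icc] at hz
          rcases (by omega : z = 2 ∨ z = 3) with rfl | rfl
          · exact h2A
          · exact hsubA (by simp), h1A⟩)
        rwa [heq] at this
  have hcard : ({2, 3} : Finset ℕ).card = 2 := by decide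
  obtain ⟨i, hi2, hij, hheq⟩ := hg.two_gen hpot hcard
  have : (1 : ℕ) ∈ ({2, 3} : Finset ℕ) := hheq ▸ Finset.mem_insert_self 1 {i}
  simp at this

lemma card_D2_le (hjr' : j ≤ r) :
    (D2set 𝒜).card ≤ r ^ 2 * Nat.choose n (r - 3) := by
  have hD2mem : ∀ D ∈ D2set 𝒜, D ∈ 𝒜 ∧ 1 ∉ D ∧ Finset.Icc 2 j ⊆ D := by
    intro D hD
    rw [D2set, Finset.mem_filter] at hD
    rcases hg.struct hD.1 with h | h
    · exact absurd h hD.2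
    · exact ⟨hD.1, hD.2, h⟩
  have hj2 := hg.hj2
  rcases (by omega : j = 2 ∨ j = 3 ∨ 4 ≤ j) with hj | hj | hj
  · -- j = 2 : use the map D ↦ insert 1 (D.erase 2) into D1
    have h2W : (2 : ℕ) ∉ Finset.Icc 3 (r + 2) := by rw [Finset.mem_Icc]; omega
    refine le_trans (window_count n r 2 (Finset.Icc 3 (r + 2)) h2W _ ?_) ?_
    · intro D hD
      obtain ⟨hD𝒜, h1D, hsubD⟩ := hD2mem D hD
      have h2D : (2 : ℕ) ∈ D := hsubD (by rw [hj]; simp)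
      refine ⟨hg.hsub hD𝒜, h2D, ?_⟩
      -- compress 2 → 1
      set B := insert 1 (D.erase 2) with hB
      have hDc := hg.hsub hD𝒜
      have hBc : B ∈ chooseFam n r := exchange_mem_chooseFam hDc h2D h1D (le_refl 1)
        (by have := hg.hrn; omega)
      have hB𝒜 : B ∈ 𝒜 := hg.hcomp D hD𝒜 B hBc (domle_exchange h2D h1D (by omega))
      have h1B : 1 ∈ B := Finset.mem_insert_self _ _
      have hBempty : B ∩ Finset.Icc 2 j = ∅ := by
        rw [hj]
        apply Finset.eq_empty_iff_forall_notMem.2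
        intro z hz
        rw [Finset.mem_inter, Finset.mem_Icc] at hz
        have hz2 : z = 2 := by omega
        subst hz2
        rcases Finset.mem_insert.1 hz.1 with h | h
        · omega
        · exact (Finset.notMem_erase 2 D) h
      have hwin := hg.window_D1 hjr' hB𝒜 h1B hBempty
      rw [hj] at hwin
      have hinter : B ∩ Finset.Icc 3 (r + 2) = D ∩ Finset.Icc 3 (r + 2) := by
        ext z
        simp only [Finset.mem_inter, hB, Finset.mem_insert, Finset.mem_erase, Finset.mem_Icc]
        constructor
        · rintro ⟨h | ⟨hz2, hzD⟩, hIcc⟩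
          · omega
          · exact ⟨hzD, hIcc⟩
        · rintro ⟨hzD, hIcc⟩
          exact ⟨Or.inr ⟨by omega, hzD⟩, hIcc⟩
      rwa [hinter] at hwin
    · apply Nat.mul_le_mul_right
      rw [Nat.card_Icc]
      exact Nat.pow_le_pow_left (by omega) 2
  · -- j = 3
    obtain ⟨A1, hA1𝒜, h1A1, hA1e⟩ := hg.D1_nonempty_j3 hj
    -- compress A1 down to A0 = {1} ∪ [4, r+2]
    set A0 := insert 1 (Finset.Icc 4 (r + 2)) with hA0
    have h1W : (1 : ℕ) ∉ Finset.Icc 4 (r + 2) := by rw [Finset.mem_Icc]; omega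
    have hA1c := mem_chooseFam.1 (hg.hsub hA1𝒜)
    have hA0c : A0 ∈ chooseFam n r := by
      rw [mem_chooseFam]
      constructor
      · intro z hz
        rw [Finset.mem_Icc]
        rcases Finset.mem_insert.1 hz with rfl | hz
        · have := hg.hrn; omega
        · rw [Finset.mem_Icc] at hz; have := hg.hrn; omega
      · rw [Finset.card_insert_of_notMem h1W, Nat.card_Icc]
        have := hg.hr; omega
    have hA0𝒜 : A0 ∈ 𝒜 := by
      refine hg.hcomp A1 hA1𝒜 A0 hA0c (domle_of_cnt ?_ ?_)
      · rw [hA1c.2, (mem_chooseFam.1 hA0c).2]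
      · intro t
        rcases Nat.eq_zero_or_pos t with rfl | ht
        · have h0 : cnt A1 0 ≤ (∅ : Finset ℕ).card := by
            apply cnt_subset_le
            intro z hz hz0
            have := bounds_of_mem hA1c.1 hz
            omega
          rw [Finset.card_empty] at h0
          exact le_trans h0 (Nat.zero_le _)
        · have hcntA0 : cnt A0 t = 1 + (min (r + 2) t + 1 - 4) := by
            rw [hA0, cnt_insert_of_le h1W (by omega), cnt_Icc]
          have hb1 : cnt A1 t ≤ (insert 1 (Finset.Icc 4 t)).card := by
            apply cnt_subset_le
            intro z hz hzt
            have hzb := bounds_of_mem hA1c.1 hz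
            have hz23 : ¬(2 ≤ z ∧ z ≤ 3) := by
              intro hcon
              have : z ∈ A1 ∩ Finset.Icc 2 j :=
                Finset.mem_inter.2 ⟨hz, Finset.mem_Icc.2 (by omega)⟩
              rw [hA1e] at this
              exact Finset.notMem_empty z this
            rcases (by omega : z = 1 ∨ 4 ≤ z) with rfl | hz4
            · exact Finset.mem_insert_self _ _
            · exact Finset.mem_insert_of_mem (Finset.mem_Icc.2 ⟨hz4, hzt⟩)
          have hbcard : (insert 1 (Finset.Icc 4 t)).card = t + 1 - 4 + 1 := by
            rw [Finset.card_insert_of_notMem (by rw [Finset.mem_Icc]; omega), Nat.card_Icc]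
          have hb2 : cnt A1 t ≤ r := hA1c.2 ▸ cnt_le_card A1 t
          omega
    -- every D ∈ D2 must meet A0, in [4, r+2]
    have hK0 : Disjoint ({2, 3} : Finset ℕ) (Finset.Icc 4 (r + 2)) := by
      rw [Finset.disjoint_left]
      intro z hz hz'
      rw [Finset.mem_Icc] at hz'
      rcases Finset.mem_insert.1 hz with rfl | hz
      · omega
      · rw [Finset.mem_singleton] at hz; omega
    refine le_trans (window_count1 n r {2, 3} (Finset.Icc 4 (r + 2)) hK0 (by decide) _ ?_) ?_
    · intro D hD
      obtain ⟨hD𝒜, h1D, hsubD⟩ := hD2mem D hD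
      refine ⟨hg.hsub hD𝒜, ?_, ?_⟩
      · intro z hz
        apply hsubD
        rw [hj]
        rcases Finset.mem_insert.1 hz with rfl | hz
        · rw [Finset.mem_Icc]; omega
        · rw [Finset.mem_singleton.1 hz, Finset.mem_Icc]; omega
      · obtain ⟨x, hx⟩ := hg.hint D hD𝒜 A0 hA0𝒜
        rw [Finset.mem_inter, hA0] at hx
        rcases Finset.mem_insert.1 hx.2 with rfl | hxw
        · exact absurd hx.1 h1D
        · exact ⟨x, Finset.mem_inter.2 ⟨hx.1, hxw⟩⟩
    · rw [Nat.card_Icc]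
      have hr := hg.hr
      have h1 : r + 2 + 1 - 4 ≤ r := by omega
      have h2 : r ≤ r ^ 2 := by
        calc r = r ^ 1 := (pow_one r).symm
          _ ≤ r ^ 2 := Nat.pow_le_pow_right (by omega) (by omega)
      exact Nat.mul_le_mul_right _ (le_trans h1 h2)
  · -- j ≥ 4
    have hsub : D2set 𝒜 ⊆ (chooseFam n r).filter (fun A => Finset.Icc 2 j ⊆ A) := by
      intro D hD
      obtain ⟨hD𝒜, _, hsubD⟩ := hD2mem D hD
      exact Finset.mem_filter.2 ⟨hg.hsub hD𝒜, hsubD⟩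
    refine le_trans (Finset.card_le_card hsub) ?_
    have h1 := card_superset_class n r (Finset.Icc 2 j)
    rw [Nat.card_Icc] at h1
    refine le_trans h1 (le_trans (choose_le_choose_right (a := r - (j + 1 - 2)) (b := r - 3)
      (by omega) ?_) ?_)
    · have hn := hg.hrn; omega
    · have : 1 ≤ r ^ 2 := Nat.one_le_pow _ _ (by have := hg.hr; omega)
      calc Nat.choose n (r - 3) = 1 * Nat.choose n (r - 3) := (one_mul _).symm
        _ ≤ r ^ 2 * Nat.choose n (r - 3) := Nat.mul_le_mul_right _ this
end Good
end S15
namespace S15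
open Finset

lemma double_step {s k : ℕ} (h : 2 * k ≤ s + 1) : (s + 1).choose k ≤ 2 * s.choose k := by
  rcases Nat.eq_zero_or_pos k with rfl | hk
  · simp
  · obtain ⟨k', rfl⟩ : ∃ k', k = k' + 1 := ⟨k - 1, by omega⟩
    have hs : k' + 1 ≤ s - k' := by omega
    have hid := Nat.choose_succ_right_eq s k'
    have hpos : 0 < s - k' := by omega
    have hle : s.choose k' * (s - k') ≤ s.choose (k' + 1) * (s - k') := by
      calc s.choose k' * (s - k') = s.choose (k' + 1) * (k' + 1) := hid.symm
        _ ≤ s.choose (k' + 1) * (s - k') := Nat.mul_le_mul_left _ hs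
    have hmono : s.choose k' ≤ s.choose (k' + 1) := Nat.le_of_mul_le_mul_right hle hpos
    have hcs : (s + 1).choose (k' + 1) = s.choose k' + s.choose (k' + 1) :=
      Nat.choose_succ_succ s k'
    omega

lemma choose_le_two_pow_mul {b k : ℕ} (d : ℕ) (h : 2 * k ≤ b + 1) :
    (b + d).choose k ≤ 2 ^ d * b.choose k := by
  induction d with
  | zero => simp
  | succ d ih =>
    have h1 : (b + (d + 1)).choose k ≤ 2 * (b + d).choose k := by
      rw [show b + (d + 1) = (b + d) + 1 by omega]
      exact double_step (by omega)
    calc (b + (d + 1)).choose k ≤ 2 * (b + d).choose k := h1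
      _ ≤ 2 * (2 ^ d * b.choose k) := Nat.mul_le_mul_left _ ih
      _ = 2 ^ (d + 1) * b.choose k := by rw [pow_succ]; ring

lemma main_count_ineq {n r : ℕ} (hr : 3 ≤ r) (hn : 2 ^ (r + 2) * r ^ 3 + 16 * r + 16 ≤ n) :
    2 * r ^ 2 * Nat.choose n (r - 3) < Nat.choose (n - r - 1) (r - 2) := by
  have hP : 0 ≤ 2 ^ (r + 2) * r ^ 3 := Nat.zero_le _
  set b := n - r - 1 with hb
  have hd : n = b + (r + 1) := by omega
  have h1 : Nat.choose n (r - 3) ≤ 2 ^ (r + 1) * Nat.choose b (r - 3) := by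
    rw [hd]
    exact choose_le_two_pow_mul (r + 1) (by omega)
  have h2 : Nat.choose b (r - 2) * (r - 2) = Nat.choose b (r - 3) * (b - (r - 3)) := by
    have := Nat.choose_succ_right_eq b (r - 3)
    rw [show r - 3 + 1 = r - 2 by omega] at this
    exact this
  have h3 : 0 < Nat.choose b (r - 3) := Nat.choose_pos (by omega)
  have haux : 2 * r ^ 2 * 2 ^ (r + 1) * (r - 2) ≤ 2 ^ (r + 2) * r ^ 3 := by
    have e1 : 2 * r ^ 2 * 2 ^ (r + 1) * (r - 2) = 2 ^ (r + 2) * (r ^ 2 * (r - 2)) := by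
      rw [pow_succ]; ring
    have e2 : r ^ 2 * (r - 2) ≤ r ^ 3 := by
      calc r ^ 2 * (r - 2) ≤ r ^ 2 * r := Nat.mul_le_mul_left _ (by omega)
        _ = r ^ 3 := by ring
    rw [e1]
    exact Nat.mul_le_mul_left _ e2
  have key : (2 * r ^ 2 * 2 ^ (r + 1)) * (r - 2) < b - (r - 3) := by omega
  have hr2 : 0 < r - 2 := by omega
  have main : (2 * r ^ 2 * (2 ^ (r + 1) * Nat.choose b (r - 3))) * (r - 2) <
      Nat.choose b (r - 2) * (r - 2) := by
    rw [h2]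
    calc (2 * r ^ 2 * (2 ^ (r + 1) * Nat.choose b (r - 3))) * (r - 2)
        = Nat.choose b (r - 3) * ((2 * r ^ 2 * 2 ^ (r + 1)) * (r - 2)) := by ring
      _ < Nat.choose b (r - 3) * (b - (r - 3)) := by
          exact (Nat.mul_lt_mul_left h3).2 key
  have hlt : 2 * r ^ 2 * (2 ^ (r + 1) * Nat.choose b (r - 3)) < Nat.choose b (r - 2) :=
    Nat.lt_of_mul_lt_mul_right main
  calc 2 * r ^ 2 * Nat.choose n (r - 3)
      ≤ 2 * r ^ 2 * (2 ^ (r + 1) * Nat.choose b (r - 3)) := Nat.mul_le_mul_left _ h1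
    _ < Nat.choose b (r - 2) := hlt

lemma exists_Lset (n r j m : ℕ) (hj : 2 ≤ j) (hjm : j < m) (hm : m ≤ r + 1) (hr : 3 ≤ r)
    (hn : 4 * r + 16 ≤ n) :
    ∃ L : Finset (Finset ℕ), L.card = Nat.choose (n - j - 1) (r - 2) ∧
      ∀ A ∈ L, A ∈ chooseFam n r ∧ 1 ∈ A ∧ m ∈ A ∧ A ∩ Finset.Icc 2 j = ∅ := by
  classical
  set dom := (Finset.Icc (j + 1) n).erase m with hdom
  have hdomcard : dom.card = n - j - 1 := by
    rw [hdom, Finset.card_erase_of_mem (Finset.mem_Icc.2 ⟨by omega, by omega⟩), Nat.card_Icc]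
    omega
  have hdommem : ∀ x ∈ dom, j + 1 ≤ x ∧ x ≤ n ∧ x ≠ m := by
    intro x hx
    rw [hdom, Finset.mem_erase, Finset.mem_Icc] at hx
    exact ⟨hx.2.1, hx.2.2, hx.1⟩
  have hmem : ∀ (T T' : Finset ℕ), T ⊆ dom → T' ⊆ dom →
      insert 1 (insert m T) = insert 1 (insert m T') → T ⊆ T' := by
    intro T T' hT hT' he z hz
    obtain ⟨hz1, _, hzm⟩ := hdommem z (hT hz)
    have : z ∈ insert 1 (insert m T') := by
      rw [← he]
      exact Finset.mem_insert_of_mem (Finset.mem_insert_of_mem hz)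
    rcases Finset.mem_insert.1 this with h | h
    · omega
    · rcases Finset.mem_insert.1 h with h | h
      · exact absurd h hzm
      · exact h
  refine ⟨(dom.powersetCard (r - 2)).image (fun S => insert 1 (insert m S)), ?_, ?_⟩
  · rw [Finset.card_image_of_injOn, Finset.card_powersetCard, hdomcard]
    intro S hS S' hS' heq
    rw [Finset.mem_coe, Finset.mem_powersetCard] at hS hS'
    exact Finset.Subset.antisymm (hmem S S' hS.1 hS'.1 heq) (hmem S' S hS'.1 hS.1 heq.symm)
  · intro A hA
    obtain ⟨S, hS, rfl⟩ := Finset.mem_image.1 hA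
    obtain ⟨hSdom, hScard⟩ := Finset.mem_powersetCard.1 hS
    have hmS : m ∉ S := fun h => (hdommem m (hSdom h)).2.2 rfl
    have h1S : (1 : ℕ) ∉ insert m S := by
      intro h
      rcases Finset.mem_insert.1 h with h | h
      · omega
      · have := hdommem 1 (hSdom h); omega
    refine ⟨?_, Finset.mem_insert_self _ _,
      Finset.mem_insert_of_mem (Finset.mem_insert_self _ _), ?_⟩
    · rw [mem_chooseFam]
      constructor
      · intro z hz
        rw [Finset.mem_Icc]
        rcases Finset.mem_insert.1 hz with rfl | hz
        · omega
        · rcases Finset.mem_insert.1 hz with rfl | hz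
          · omega
          · have := hdommem z (hSdom hz); omega
      · rw [Finset.card_insert_of_notMem h1S, Finset.card_insert_of_notMem hmS, hScard]
        omega
    · apply Finset.eq_empty_iff_forall_notMem.2
      intro z hz
      rw [Finset.mem_inter, Finset.mem_Icc] at hz
      obtain ⟨hzA, hz2, hzj⟩ := hz
      rcases Finset.mem_insert.1 hzA with rfl | h
      · omega
      · rcases Finset.mem_insert.1 h with rfl | h
        · omega
        · have := hdommem z (hSdom h); omega

namespace Good

variable {n r j : ℕ} {𝒜 : Finset (Finset ℕ)} (hg : Good n r j 𝒜)

include hg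

lemma case_lt {X : Finset ℕ} {m : ℕ} (hX : X ⊆ Finset.Icc 2 (r + 1)) (hmX : m ∈ X)
    (hjm : j < m) (hmr : m ≤ r + 1) (hXm : ∀ x ∈ X, x ≤ m) :
    hit X 𝒜 < hit X (AHM n r m) := by
  classical
  have hjr' : j ≤ r := by omega
  set p := fun A : Finset ℕ => (A ∩ X).Nonempty with hp
  set core := (chooseFam n r).filter
    (fun A => (1 ∈ A ∧ (A ∩ Finset.Icc 2 j).Nonempty) ∧ (A ∩ X).Nonempty) with hcore
  -- upper bound for hit X 𝒜
  have hsplit : 𝒜.filter p ⊆ (core ∪ D1set j 𝒜) ∪ D2set 𝒜 := by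
    intro A hA
    rw [Finset.mem_filter] at hA
    obtain ⟨hA𝒜, hpA⟩ := hA
    by_cases h1A : 1 ∈ A
    · by_cases hAj : (A ∩ Finset.Icc 2 j).Nonempty
      · exact Finset.mem_union_left _ (Finset.mem_union_left _
          (Finset.mem_filter.2 ⟨hg.hsub hA𝒜, ⟨h1A, hAj⟩, hpA⟩))
      · rw [Finset.not_nonempty_iff_eq_empty] at hAj
        exact Finset.mem_union_left _ (Finset.mem_union_right _
          (Finset.mem_filter.2 ⟨hA𝒜, h1A, hAj⟩))
    · exact Finset.mem_union_right _ (Finset.mem_filter.2 ⟨hA𝒜, h1A⟩)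
  have hup : hit X 𝒜 ≤ core.card + ((D1set j 𝒜).card + (D2set 𝒜).card) := by
    calc hit X 𝒜 ≤ ((core ∪ D1set j 𝒜) ∪ D2set 𝒜).card := Finset.card_le_card hsplit
      _ ≤ (core ∪ D1set j 𝒜).card + (D2set 𝒜).card := Finset.card_union_le _ _
      _ ≤ core.card + (D1set j 𝒜).card + (D2set 𝒜).card := by
          have := Finset.card_union_le core (D1set j 𝒜)
          omega
      _ = core.card + ((D1set j 𝒜).card + (D2set 𝒜).card) := by omega
  -- lower bound for hit X (AHM n r m)
  obtain ⟨L, hLcard, hLmem⟩ := exists_Lset n r j m hg.hj2 hjm hmr hg.hr hg.hrn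
  have hcoresub : core ⊆ (AHM n r m).filter p := by
    intro A hA
    rw [Finset.mem_filter] at hA
    obtain ⟨hAc, ⟨h1A, _⟩, hpA⟩ := hA
    refine Finset.mem_filter.2 ⟨?_, hpA⟩
    rw [AHM, Finset.mem_filter]
    obtain ⟨x, hx⟩ := hpA
    rw [Finset.mem_inter] at hx
    have hx2 := Finset.mem_Icc.1 (hX hx.2)
    refine ⟨hAc, Or.inl ⟨h1A, ⟨x, Finset.mem_inter.2 ⟨hx.1, Finset.mem_Icc.2
      ⟨hx2.1, hXm x hx.2⟩⟩⟩⟩⟩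
  have hLsub : L ⊆ (AHM n r m).filter p := by
    intro A hA
    obtain ⟨hAc, h1A, hmA, _⟩ := hLmem A hA
    refine Finset.mem_filter.2 ⟨?_, ⟨m, Finset.mem_inter.2 ⟨hmA, hmX⟩⟩⟩
    rw [AHM, Finset.mem_filter]
    have hm2 := Finset.mem_Icc.1 (hX hmX)
    exact ⟨hAc, Or.inl ⟨h1A, ⟨m, Finset.mem_inter.2 ⟨hmA, Finset.mem_Icc.2 ⟨hm2.1, le_refl m⟩⟩⟩⟩⟩
  have hdisj : Disjoint core L := by
    rw [Finset.disjoint_left]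
    intro A hA hA'
    rw [Finset.mem_filter] at hA
    obtain ⟨x, hx⟩ := hA.2.1.2
    rw [(hLmem A hA').2.2.2] at hx
    exact Finset.notMem_empty x hx
  have hlow : core.card + L.card ≤ hit X (AHM n r m) := by
    rw [← Finset.card_union_of_disjoint hdisj]
    exact Finset.card_le_card (Finset.union_subset hcoresub hLsub)
  -- the numeric comparison
  have hD1 := hg.card_D1_le hjr'
  have hD2 := hg.card_D2_le hjr'
  have hmain := main_count_ineq hg.hr hg.hn
  have hmono : Nat.choose (n - r - 1) (r - 2) ≤ Nat.choose (n - j - 1) (r - 2) :=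
    Nat.choose_le_choose _ (by omega)
  have : (D1set j 𝒜).card + (D2set 𝒜).card < Nat.choose (n - j - 1) (r - 2) := by
    have h2 : (D1set j 𝒜).card + (D2set 𝒜).card ≤ 2 * r ^ 2 * Nat.choose n (r - 3) := by
      have : r ^ 2 * Nat.choose n (r - 3) + r ^ 2 * Nat.choose n (r - 3)
          = 2 * r ^ 2 * Nat.choose n (r - 3) := by ring
      omega
    omega
  rw [hLcard] at hlow
  omega

end Good
end S15
namespace S15
namespace Good
open Finset

variable {n r j : ℕ} {𝒜 : Finset (Finset ℕ)} (hg : Good n r j 𝒜)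

include hg

lemma case_ge {X : Finset ℕ} {m : ℕ} (hX : X ⊆ Finset.Icc 2 (r + 1)) (hmX : m ∈ X)
    (hm3 : 3 ≤ m) (hjm : m ≤ j) (hXm : ∀ x ∈ X, x ≤ m) (hne : 𝒜 ≠ AHM n r m) :
    hit X 𝒜 < hit X (AHM n r m) := by
  classical
  set p := fun A : Finset ℕ => (A ∩ X).Nonempty with hp
  have hm2 : (2 : ℕ) ≤ m := by omega
  have hmIcc : m ∈ Finset.Icc 2 m := Finset.mem_Icc.2 ⟨hm2, le_refl m⟩
  have h2Icc : (2 : ℕ) ∈ Finset.Icc 2 m := Finset.mem_Icc.2 ⟨le_refl 2, by omega⟩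
  -- inclusion of hitting sets
  have hsub : 𝒜.filter p ⊆ (AHM n r m).filter p := by
    intro A hA
    rw [Finset.mem_filter] at hA
    obtain ⟨hA𝒜, hpA⟩ := hA
    refine Finset.mem_filter.2 ⟨?_, hpA⟩
    rw [AHM, Finset.mem_filter]
    refine ⟨hg.hsub hA𝒜, ?_⟩
    rcases hg.struct hA𝒜 with h1A | hstr
    · left
      obtain ⟨x, hx⟩ := hpA
      rw [Finset.mem_inter] at hx
      have hx2 := Finset.mem_Icc.1 (hX hx.2)
      exact ⟨h1A, ⟨x, Finset.mem_inter.2 ⟨hx.1, Finset.mem_Icc.2 ⟨hx2.1, hXm x hx.2⟩⟩⟩⟩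
    · right
      intro z hz
      rw [Finset.mem_Icc] at hz
      exact hstr (Finset.mem_Icc.2 ⟨hz.1, by omega⟩)
  -- a strict witness
  have hwit : ∃ W ∈ (AHM n r m).filter p, W ∉ 𝒜.filter p := by
    rcases Nat.lt_or_ge m j with hlt | hge
    · -- m < j
      obtain ⟨S, hS1, hS2, hS3, _⟩ := exists_fresh n ∅ j (r + 1 - m)
        (by have := hg.hrn; have := hg.hjr; simp; omega)
      set W := Finset.Icc 2 m ∪ S with hW
      have hdisj : Disjoint (Finset.Icc 2 m) S := by
        rw [Finset.disjoint_left]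
        intro z hz hzS
        rw [Finset.mem_Icc] at hz
        have := hS3 z hzS
        omega
      have hWc : W ∈ chooseFam n r := by
        rw [mem_chooseFam]
        constructor
        · intro z hz
          rcases Finset.mem_union.1 hz with h | h
          · rw [Finset.mem_Icc] at h ⊢
            have := hg.hrn; have := hg.hjr; omega
          · exact hS1 h
        · rw [Finset.card_union_of_disjoint hdisj, Nat.card_Icc, hS2]
          have := hg.hjr; omega
      have hWAHM : W ∈ AHM n r m := by
        rw [AHM, Finset.mem_filter]
        exact ⟨hWc, Or.inr (fun z hz => Finset.mem_union_left _ hz)⟩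
      have hWp : p W := ⟨m, Finset.mem_inter.2 ⟨Finset.mem_union_left _ hmIcc, hmX⟩⟩
      have hW𝒜 : W ∉ 𝒜 := by
        intro hmem
        rcases hg.struct hmem with h1 | hstr
        · rcases Finset.mem_union.1 h1 with h | h
          · rw [Finset.mem_Icc] at h; omega
          · have := hS3 1 h; omega
        · have hjW : j ∈ W := hstr (Finset.mem_Icc.2 ⟨hg.hj2, le_refl j⟩)
          rcases Finset.mem_union.1 hjW with h | h
          · rw [Finset.mem_Icc] at h; omega
          · have := hS3 j h; omega
      exact ⟨W, Finset.mem_filter.2 ⟨hWAHM, hWp⟩,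
        fun h => hW𝒜 (Finset.mem_filter.1 h).1⟩
    · -- m = j
      have hmj : m = j := by omega
      by_cases hall : ∀ D ∈ chooseFam n r, Finset.Icc 2 m ⊆ D → 1 ∉ D → D ∈ 𝒜
      · -- then 𝒜 = AHM n r m, contradiction
        exfalso
        apply hne
        apply Finset.Subset.antisymm
        · intro A hA𝒜
          rw [AHM, Finset.mem_filter]
          refine ⟨hg.hsub hA𝒜, ?_⟩
          rcases hg.struct hA𝒜 with h1A | hstr
          · by_cases hAm : (A ∩ Finset.Icc 2 m).Nonempty
            · exact Or.inl ⟨h1A, hAm⟩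
            · exfalso
              have hAc := mem_chooseFam.1 (hg.hsub hA𝒜)
              obtain ⟨S, hS1, hS2, hS3, hS4⟩ := exists_fresh n A (2 * r + 2) (r + 1 - m)
                (by have := hg.hrn; have := hAc.2; omega)
              set D := Finset.Icc 2 m ∪ S with hD
              have hdisj : Disjoint (Finset.Icc 2 m) S := by
                rw [Finset.disjoint_left]
                intro z hz hzS
                rw [Finset.mem_Icc] at hz
                have := hS3 z hzS
                have := hg.hjr
                omega
              have hDc : D ∈ chooseFam n r := by
                rw [mem_chooseFam]
                constructor
                · intro z hz
                  rcases Finset.mem_union.1 hz with h | h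
                  · rw [Finset.mem_Icc] at h ⊢
                    have := hg.hrn; have := hg.hjr; omega
                  · exact hS1 h
                · rw [Finset.card_union_of_disjoint hdisj, Nat.card_Icc, hS2]
                  have := hg.hjr; omega
              have h1D : (1 : ℕ) ∉ D := by
                intro h
                rcases Finset.mem_union.1 h with h | h
                · rw [Finset.mem_Icc] at h; omega
                · have := hS3 1 h; omega
              have hD𝒜 : D ∈ 𝒜 := hall D hDc (fun z hz => Finset.mem_union_left _ hz) h1D
              obtain ⟨x, hx⟩ := hg.hint A hA𝒜 D hD𝒜
              rw [Finset.mem_inter] at hx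
              rcases Finset.mem_union.1 hx.2 with h | h
              · exact hAm ⟨x, Finset.mem_inter.2 ⟨hx.1, h⟩⟩
              · exact (Finset.disjoint_left.1 hS4) h hx.1
          · exact Or.inr (by rw [hmj]; exact hstr)
        · intro B hB
          rw [AHM, Finset.mem_filter] at hB
          obtain ⟨hBc, hcase⟩ := hB
          rcases hcase with ⟨h1B, hBm⟩ | hstr
          · refine hg.core_mem hBc h1B ?_
            obtain ⟨x, hx⟩ := hBm
            rw [Finset.mem_inter, Finset.mem_Icc] at hx
            exact ⟨x, Finset.mem_inter.2 ⟨hx.1, Finset.mem_Icc.2 ⟨hx.2.1, by omega⟩⟩⟩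
          · by_cases h1B : 1 ∈ B
            · exact hg.core_mem hBc h1B
                ⟨2, Finset.mem_inter.2 ⟨hstr h2Icc, Finset.mem_Icc.2 ⟨le_refl 2, hg.hj2⟩⟩⟩
            · exact hall B hBc hstr h1B
      · push_neg at hall
        obtain ⟨D, hDc, hDm, h1D, hD𝒜⟩ := hall
        refine ⟨D, Finset.mem_filter.2 ⟨?_, ?_⟩, fun h => hD𝒜 (Finset.mem_filter.1 h).1⟩
        · rw [AHM, Finset.mem_filter]
          exact ⟨hDc, Or.inr hDm⟩
        · exact ⟨m, Finset.mem_inter.2 ⟨hDm hmIcc, hmX⟩⟩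
  obtain ⟨W, hW1, hW2⟩ := hwit
  exact Finset.card_lt_card ((Finset.ssubset_iff_of_subset hsub).2 ⟨W, hW1, hW2⟩)

end Good
end S15

/-- For `r ≥ 3` and `n` sufficiently large: for every nonempty
`X ⊆ [2, r+1]` with `X ≠ {2}`, writing `m = max X`, every MLCIF
`𝒜 ∈ ⋃_{j=2}^{r+1} I_j` with `𝒜 ≠ AHM_m` satisfies `hit_X(AHM_m) > hit_X(𝒜)`. -/
theorem stmt15 :
    ∀ r : ℕ, 3 ≤ r → ∃ N : ℕ, ∀ n : ℕ, N ≤ n →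
      ∀ X : Finset ℕ, X ⊆ Finset.Icc 2 (r + 1) → ∀ hX : X.Nonempty, X ≠ {2} →
        ∀ 𝒜 : Finset (Finset ℕ), (∃ j : ℕ, 2 ≤ j ∧ j ≤ r + 1 ∧ MemI n r j 𝒜) →
          𝒜 ≠ AHM n r (X.max' hX) →
          hit X 𝒜 < hit X (AHM n r (X.max' hX)) := by
  intro r hr
  refine ⟨2 ^ (r + 2) * r ^ 3 + 16 * r + 16, ?_⟩
  intro n hn X hXsub hX hX2 𝒜 hmemI hne
  obtain ⟨j, hj2, hjr, hmem⟩ := hmemI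
  set m := X.max' hX with hm
  have hmX : m ∈ X := X.max'_mem hX
  have hmIcc := Finset.mem_Icc.1 (hXsub hmX)
  have hXm : ∀ x ∈ X, x ≤ m := fun x hx => X.le_max' x hx
  have hm3 : 3 ≤ m := by
    by_contra hc
    apply hX2
    have hm2 : m = 2 := by omega
    apply Finset.eq_singleton_iff_unique_mem.2
    refine ⟨hm2 ▸ hmX, ?_⟩
    intro x hx
    have h1 := Finset.mem_Icc.1 (hXsub hx)
    have h2 := hXm x hx
    omega
  have hg : S15.Good n r j 𝒜 := ⟨hr, hj2, hjr, hn, hmem⟩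
  rcases Nat.lt_or_ge j m with hjm | hjm
  · exact hg.case_lt hXsub hmX hjm hmIcc.2 hXm
  · exact hg.case_ge hXsub hmX hm3 hjm hXm hne
end
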